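/- arXiv:0708.4409 — 2 statements merged into one kernel-verified Lean document; each statement's English description precedes it below -/
import Mathlib

section
/- Let t be a non-recurrent infinite word with Alph(t) = A all of whose factors are finite episturmian. Then there exist an infinite sequence (t^(i))_{i≥0} of non-recurrent infinite words and letters x_1, x_2, x_3, … in A such that t^(0) = t and, for every i ≥ 1, t'^(i−1) = ψ_{x_i}(t^(i)), where t'^(i−1) = t^(i−1) if t^(i−1) begins with the letter x_i, and t'^(i−1) = x_i·t^(i−1) otherwise. -/
/-- The prefix of length `k` of an infinite word `t`. -/
def prefixList {A : Type*} (t : ℕ → A) (k : ℕ) : List A := (List.range k).map t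

/-- `u` occurs as a factor of the infinite word `t` at position `i`. -/
def FactorAt {A : Type*} (t : ℕ → A) (u : List A) (i : ℕ) : Prop :=
  u = (List.range u.length).map (fun j => t (i + j))

/-- `u` is a (finite) factor of the infinite word `t`. -/
def IsFactorInf {A : Type*} (t : ℕ → A) (u : List A) : Prop := ∃ i, FactorAt t u i

/-- An infinite word is recurrent if each of its factors occurs infinitely often. -/
def Recurrent {A : Type*} (t : ℕ → A) : Prop :=
  ∀ u, IsFactorInf t u → ∀ N, ∃ i, N ≤ i ∧ FactorAt t u i

/-- `u` is a right special factor of `t`. -/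
def RightSpecial {A : Type*} (t : ℕ → A) (u : List A) : Prop :=
  ∃ a b : A, a ≠ b ∧ IsFactorInf t (u ++ [a]) ∧ IsFactorInf t (u ++ [b])

/-- `u` is a left special factor of `t`. -/
def LeftSpecial {A : Type*} (t : ℕ → A) (u : List A) : Prop :=
  ∃ a b : A, a ≠ b ∧ IsFactorInf t (a :: u) ∧ IsFactorInf t (b :: u)

/-- An infinite word is episturmian if its set of factors is closed under reversal
and it has at most one right special factor of each length. -/
def Episturmian {A : Type*} (t : ℕ → A) : Prop :=
  (∀ u, IsFactorInf t u → IsFactorInf t u.reverse) ∧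
  (∀ u v, RightSpecial t u → RightSpecial t v → u.length = v.length → u = v)

/-- A standard episturmian word: episturmian with all left special factors prefixes. -/
def StdEpisturmian {A : Type*} (t : ℕ → A) : Prop :=
  Episturmian t ∧ ∀ u, LeftSpecial t u → u = prefixList t u.length

/-- A finite word is finite episturmian if it is a factor of some episturmian infinite word. -/
def FiniteEpisturmian {A : Type*} (w : List A) : Prop :=
  ∃ t : ℕ → A, Episturmian t ∧ IsFactorInf t w

/-- An acceptable pair: a strict total order `r` on `A` together with a letter `a`
that is minimal for `r`. -/
def AcceptablePair {A : Type*} (r : A → A → Prop) (a : A) : Prop :=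
  IsStrictTotalOrder A r ∧ ∀ b, b ≠ a → r a b

/-- Non-strict lexicographic order on finite words induced by the order `r` on letters. -/
def listLe {A : Type*} (r : A → A → Prop) (u v : List A) : Prop := u = v ∨ List.Lex r u v

/-- Non-strict lexicographic order on infinite words induced by the order `r` on letters. -/
def infLe {A : Type*} (r : A → A → Prop) (x y : ℕ → A) : Prop :=
  x = y ∨ ∃ i, (∀ j, j < i → x j = y j) ∧ r (x i) (y i)

/-- `m` is the lexicographically smallest factor of the finite word `w` of length `k`. -/
def IsMinFacLen {A : Type*} (r : A → A → Prop) (w : List A) (k : ℕ) (m : List A) : Prop :=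
  m <:+: w ∧ m.length = k ∧ ∀ u, u <:+: w → u.length = k → listLe r m u

/-- `m` is the lexicographically greatest factor of the finite word `w` of length `k`. -/
def IsMaxFacLen {A : Type*} (r : A → A → Prop) (w : List A) (k : ℕ) (m : List A) : Prop :=
  m <:+: w ∧ m.length = k ∧ ∀ u, u <:+: w → u.length = k → listLe r u m

/-- `m = min(w)`: for each `j ≤ |m|` the prefix of `m` of length `j` is `min(w|j)`,
and `|m|` is maximal with this chain property. -/
def IsMinFin {A : Type*} (r : A → A → Prop) (w m : List A) : Prop :=
  m ≠ [] ∧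
  (∀ j, j ≤ m.length → IsMinFacLen r w j (m.take j)) ∧
  (∀ m', IsMinFacLen r w (m.length + 1) m' → ¬ m <+: m')

/-- `m = max(w)` (finite word version). -/
def IsMaxFin {A : Type*} (r : A → A → Prop) (w m : List A) : Prop :=
  m ≠ [] ∧
  (∀ j, j ≤ m.length → IsMaxFacLen r w j (m.take j)) ∧
  (∀ m', IsMaxFacLen r w (m.length + 1) m' → ¬ m <+: m')

/-- `m = min(t)` for an infinite word `t`: each prefix of `m` is the lexicographically
smallest factor of `t` of its length. -/
def IsMinInf {A : Type*} (r : A → A → Prop) (t m : ℕ → A) : Prop :=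
  ∀ k, IsFactorInf t (prefixList m k) ∧
    ∀ u, IsFactorInf t u → u.length = k → listLe r (prefixList m k) u

/-- `m = max(t)` for an infinite word `t`. -/
def IsMaxInf {A : Type*} (r : A → A → Prop) (t m : ℕ → A) : Prop :=
  ∀ k, IsFactorInf t (prefixList m k) ∧
    ∀ u, IsFactorInf t u → u.length = k → listLe r u (prefixList m k)

/-- Prepend a letter to an infinite word. -/
def consInf {A : Type*} (a : A) (t : ℕ → A) : ℕ → A
  | 0 => a
  | n + 1 => t n

/-- Prepend a finite word to an infinite word. -/
def wordAppend {A : Type*} (v : List A) (t : ℕ → A) : ℕ → A :=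
  fun n => if h : n < v.length then v.get ⟨n, h⟩ else t (n - v.length)

/-- The pure epistandard morphism `ψ_z` on finite words: it fixes `z` and sends
each letter `x ≠ z` to `zx`. -/
def psiW {A : Type*} [DecidableEq A] (z : A) (w : List A) : List A :=
  (w.map (fun x => if x = z then [z] else [z, x])).flatten

/-- The finite word `u` is a prefix of the infinite word `t`. -/
def IsPrefixInf {A : Type*} (u : List A) (t : ℕ → A) : Prop := u = prefixList t u.length

/-- `y = f(t)`: the infinite word `y` is the image of the infinite word `t` under the
(non-erasing) morphism `f`, acting letter by letter. -/
def IsMorphImage {A : Type*} (f : List A → List A) (t y : ℕ → A) : Prop :=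
  ∀ k, IsPrefixInf (f (prefixList t k)) y

/-- Pure epistandard morphisms: finite compositions of the morphisms `ψ_a`. -/
inductive PureEpistandard {A : Type*} [DecidableEq A] : (List A → List A) → Prop
  | id : PureEpistandard _root_.id
  | comp (a : A) (f : List A → List A) : PureEpistandard f →
      PureEpistandard (fun w => psiW a (f w))

/-- An infinite word is episkew if it is non-recurrent and all of its factors
are finite episturmian. -/
def Episkew {A : Type*} (t : ℕ → A) : Prop :=
  ¬ Recurrent t ∧ ∀ u, IsFactorInf t u → FiniteEpisturmian u

/- Two-letter (Bool) notions: `false` plays the role of `a`, `true` of `b`,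
with the order `false < true`. -/

/-- A finite binary word is balanced. -/
def BalancedList (w : List Bool) : Prop :=
  ∀ u v : List Bool, u <:+: w → v <:+: w → u.length = v.length →
    |(u.count true : ℤ) - (v.count true : ℤ)| ≤ 1

/-- An infinite binary word is balanced. -/
def BalancedInf (t : ℕ → Bool) : Prop :=
  ∀ u v : List Bool, IsFactorInf t u → IsFactorInf t v → u.length = v.length →
    |(u.count true : ℤ) - (v.count true : ℤ)| ≤ 1

/-- The Sturmian word of slope `α` and intercept `ρ` defined via floors. -/
def SturmianFloor (α ρ : ℝ) (t : ℕ → Bool) : Prop :=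
  ∀ n : ℕ, t n = true ↔ ⌊((n : ℝ) + 1) * α + ρ⌋ ≠ ⌊(n : ℝ) * α + ρ⌋

/-- The Sturmian word of slope `α` and intercept `ρ` defined via ceilings. -/
def SturmianCeil (α ρ : ℝ) (t : ℕ → Bool) : Prop :=
  ∀ n : ℕ, t n = true ↔ ⌈((n : ℝ) + 1) * α + ρ⌉ ≠ ⌈(n : ℝ) * α + ρ⌉

/-- Aperiodic Sturmian words: those of irrational slope. -/
def IsAperiodicSturmian (t : ℕ → Bool) : Prop :=
  ∃ α ρ : ℝ, α ∈ Set.Icc (0 : ℝ) 1 ∧ ρ ∈ Set.Icc (0 : ℝ) 1 ∧ Irrational α ∧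
    (SturmianFloor α ρ t ∨ SturmianCeil α ρ t)

/-- Standard Sturmian words: those with `ρ = α`. -/
def IsStandardSturmian (t : ℕ → Bool) : Prop :=
  ∃ α : ℝ, α ∈ Set.Icc (0 : ℝ) 1 ∧ (SturmianFloor α α t ∨ SturmianCeil α α t)

/-- A fine infinite binary word: `(min(t), max(t)) = (a·s, b·s)` for some infinite word `s`. -/
def FineBool (t : ℕ → Bool) : Prop :=
  ∃ s : ℕ → Bool, IsMinInf (· < ·) t (consInf false s) ∧ IsMaxInf (· < ·) t (consInf true s)

/-- A periodic infinite word. -/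
def PeriodicInf {A : Type*} (t : ℕ → A) : Prop := ∃ p, 0 < p ∧ ∀ i, t (i + p) = t i

/-- An ultimately periodic infinite word. -/
def UltPeriodicInf {A : Type*} (t : ℕ → A) : Prop :=
  ∃ p, 0 < p ∧ ∃ m, ∀ i, m ≤ i → t (i + p) = t i

namespace EpiAux
variable {A : Type*}

/-- Segment of an infinite word. -/
def seg (t : ℕ → A) (i n : ℕ) : List A := (List.range n).map fun j => t (i + j)

@[simp] lemma seg_length (t : ℕ → A) (i n : ℕ) : (seg t i n).length = n := by simp [seg]

@[simp] lemma seg_zero (t : ℕ → A) (i : ℕ) : seg t i 0 = [] := rfl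

@[simp] lemma seg_getElem (t : ℕ → A) (i n j : ℕ) (h : j < (seg t i n).length) :
    (seg t i n)[j] = t (i + j) := by simp [seg]

lemma factorAt_def (t : ℕ → A) (u : List A) (i : ℕ) :
    FactorAt t u i ↔ u = seg t i u.length := Iff.rfl

lemma factorAt_pointwise {t : ℕ → A} {u : List A} {i : ℕ} (h : FactorAt t u i)
    (j : ℕ) (hj : j < u.length) : u[j] = t (i + j) := by
  rw [factorAt_def] at h
  rw [List.getElem_of_eq h hj]
  simp

lemma factorAt_of_pointwise {t : ℕ → A} {u : List A} {i : ℕ}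
    (h : ∀ j (_ : j < u.length), u[j] = t (i + j)) : FactorAt t u i := by
  rw [factorAt_def]
  apply List.ext_getElem (by simp)
  intro j h1 h2
  simpa using h j h1

lemma factorAt_seg (t : ℕ → A) (i n : ℕ) : FactorAt t (seg t i n) i :=
  factorAt_of_pointwise (by simp)

@[simp] lemma factorAt_nil (t : ℕ → A) (i : ℕ) : FactorAt t ([] : List A) i := rfl

lemma seg_add (t : ℕ → A) (i m n : ℕ) : seg t i (m + n) = seg t i m ++ seg t (i + m) n := by
  apply List.ext_getElem (by simp)
  intro j h1 h2
  rcases lt_or_ge j m with h | h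
  · rw [List.getElem_append_left (by simpa using h)]
    simp
  · rw [List.getElem_append_right (by simpa using h)]
    simp only [seg_getElem, seg_length]
    congr 1
    omega

lemma seg_one (t : ℕ → A) (i : ℕ) : seg t i 1 = [t i] := by
  simp [seg, List.range_succ]

lemma seg_succ (t : ℕ → A) (i n : ℕ) : seg t i (n+1) = seg t i n ++ [t (i+n)] := by
  rw [seg_add t i n 1, seg_one]

lemma factorAt_append {t : ℕ → A} {u v : List A} {i : ℕ} :
    FactorAt t (u ++ v) i ↔ FactorAt t u i ∧ FactorAt t v (i + u.length) := by
  constructor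
  · intro h
    constructor
    · apply factorAt_of_pointwise
      intro j hj
      have := factorAt_pointwise h j (by simp; omega)
      rwa [List.getElem_append_left hj] at this
    · apply factorAt_of_pointwise
      intro j hj
      have := factorAt_pointwise h (u.length + j) (by simp; omega)
      rw [List.getElem_append_right (by omega)] at this
      simpa [Nat.add_assoc] using this
  · rintro ⟨h1, h2⟩
    apply factorAt_of_pointwise
    intro j hj
    rcases lt_or_ge j u.length with h | h
    · rw [List.getElem_append_left h]
      exact factorAt_pointwise h1 j h
    · rw [List.getElem_append_right (by omega)]
      have := factorAt_pointwise h2 (j - u.length) (by simp at hj ⊢; omega)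
      rw [this]
      congr 1
      omega

lemma factorAt_cons {t : ℕ → A} {c : A} {u : List A} {i : ℕ} :
    FactorAt t (c :: u) i ↔ c = t i ∧ FactorAt t u (i + 1) := by
  have := factorAt_append (t := t) (u := [c]) (v := u) (i := i)
  simp only [List.singleton_append, List.length_singleton] at this
  rw [this]
  constructor
  · rintro ⟨h1, h2⟩
    exact ⟨factorAt_pointwise h1 0 (by simp), h2⟩
  · rintro ⟨h1, h2⟩
    refine ⟨factorAt_of_pointwise ?_, h2⟩
    intro j hj
    simp at hj
    subst hj
    simpa using h1

lemma seg_prefix (t : ℕ → A) (i : ℕ) {m n : ℕ} (h : m ≤ n) : seg t i m <+: seg t i n := by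
  rw [show n = m + (n - m) by omega, seg_add]
  exact List.prefix_append _ _

lemma isFactor_seg (t : ℕ → A) (i n : ℕ) : IsFactorInf t (seg t i n) :=
  ⟨i, factorAt_seg t i n⟩

lemma factorAt_of_infix {t : ℕ → A} {u v : List A} {i : ℕ} (h : FactorAt t v i)
    (hs : u <:+: v) : ∃ j, FactorAt t u (i + j) ∧ j + u.length ≤ v.length := by
  obtain ⟨p, s, rfl⟩ := hs
  rw [List.append_assoc, factorAt_append] at h
  exact ⟨p.length, (factorAt_append.mp h.2).1, by simp⟩

lemma isFactor_of_infix {t : ℕ → A} {u v : List A} (h : IsFactorInf t v)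
    (hs : u <:+: v) : IsFactorInf t u := by
  obtain ⟨i, hi⟩ := h
  obtain ⟨j, hj, -⟩ := factorAt_of_infix hi hs
  exact ⟨i + j, hj⟩

lemma prefixList_eq_seg (t : ℕ → A) (k : ℕ) : prefixList t k = seg t 0 k := by
  simp [prefixList, seg]

/-- Reversal-closed factor sets give recurrent words. -/
theorem recurrent_of_rev_closed (t : ℕ → A)
    (hrev : ∀ u, IsFactorInf t u → IsFactorInf t u.reverse) : Recurrent t := by
  have key : ∀ (u : List A) (i : ℕ), FactorAt t u i → ∀ N, ∃ j, N ≤ j ∧ FactorAt t u.reverse j := by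
    intro u i h N
    set P := i + u.length + N with hP
    have hp : IsFactorInf t (seg t 0 P) := isFactor_seg t 0 P
    obtain ⟨j₀, hj₀⟩ := hrev _ hp
    refine ⟨j₀ + (P - i - u.length), by omega, ?_⟩
    apply factorAt_of_pointwise
    intro m hm
    simp only [List.length_reverse] at hm
    rw [List.getElem_reverse]
    have h1 : u[u.length - 1 - m] = t (i + (u.length - 1 - m)) :=
      factorAt_pointwise h _ (by omega)
    have h2 := factorAt_pointwise hj₀ (P - i - u.length + m)
      (by simp only [List.length_reverse, seg_length]; omega)
    rw [List.getElem_reverse] at h2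
    simp only [seg_length, seg_getElem] at h2
    rw [h1]
    rw [show j₀ + (P - i - u.length) + m = j₀ + (P - i - u.length + m) by omega, ← h2]
    congr 1
    simp only [List.length_reverse, seg_length] at *
    omega
  intro u hu N
  obtain ⟨i, hi⟩ := hu
  obtain ⟨j, -, hj⟩ := key u i hi 0
  obtain ⟨m, hm, hm'⟩ := key u.reverse j hj N
  rw [List.reverse_reverse] at hm'
  exact ⟨m, hm, hm'⟩

end EpiAux
namespace EpiAux
variable {A : Type*}

lemma isFactor_pair (t : ℕ → A) (n : ℕ) : IsFactorInf t [t n, t (n+1)] :=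
  ⟨n, by rw [factorAt_cons, factorAt_cons]; exact ⟨rfl, rfl, factorAt_nil t _⟩⟩

/-- unique successor for non-right-special letters -/
lemma succ_unique {t : ℕ → A} {c d d' : A} (hc : ¬ RightSpecial t [c])
    (h1 : IsFactorInf t [c, d]) (h2 : IsFactorInf t [c, d']) : d = d' := by
  by_contra hne
  exact hc ⟨d, d', hne, by simpa using h1, by simpa using h2⟩

/-- alternation: if neither a nor b is right special and ab occurs at i, the word
alternates a b a b ... from i on. -/
lemma alternation {t : ℕ → A}
    (hrev : ∀ u, IsFactorInf t u → IsFactorInf t u.reverse)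
    {a b : A} {i : ℕ} (hia : t i = a) (hib : t (i+1) = b)
    (hA : ¬ RightSpecial t [a]) (hB : ¬ RightSpecial t [b]) :
    ∀ k, t (i + k) = (if Even k then a else b) := by
  have hab : IsFactorInf t [a, b] := by
    have := isFactor_pair t i; rwa [hia, hib] at this
  have hba : IsFactorInf t [b, a] := by simpa using hrev _ hab
  intro k
  induction k with
  | zero => simpa using hia
  | succ k ih =>
    have hpair : IsFactorInf t [t (i+k), t (i+k+1)] := isFactor_pair t (i+k)
    rcases Nat.even_or_odd k with he | ho
    · rw [if_pos he] at ih
      rw [ih] at hpair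
      have := succ_unique hA hpair hab
      simp [Nat.even_add_one, he, ← this, ← Nat.add_assoc]
    · rw [if_neg (by simpa [Nat.not_even_iff_odd] using ho)] at ih
      rw [ih] at hpair
      have := succ_unique hB hpair hba
      simp [Nat.even_add_one, Nat.not_even_iff_odd.mpr ho, ← this, ← Nat.add_assoc]

/-- Lemma A: every episturmian word has a separating letter. -/
theorem sep_letter_of_episturmian (e : ℕ → A) (he : Episturmian e) :
    ∃ x, ∀ n, e n = x ∨ e (n+1) = x := by
  have hrec : Recurrent e := recurrent_of_rev_closed e he.1
  by_cases hex : ∃ r, RightSpecial e [r]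
  · obtain ⟨r, hr⟩ := hex
    refine ⟨r, fun n => ?_⟩
    by_contra hcon
    push_neg at hcon
    obtain ⟨ha, hb⟩ := hcon
    have hA : ¬ RightSpecial e [e n] := fun h => ha (by
      have := he.2 _ _ h hr rfl
      simpa using this)
    have hB : ¬ RightSpecial e [e (n+1)] := fun h => hb (by
      have := he.2 _ _ h hr rfl
      simpa using this)
    have halt := alternation he.1 (a := e n) (b := e (n+1)) rfl rfl hA hB
    -- r occurs somewhere late
    have hrf : IsFactorInf e [r] := by
      obtain ⟨c, d, -, hc, -⟩ := hr
      exact isFactor_of_infix hc ⟨[], [c], by simp⟩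
    obtain ⟨m, hm, hm'⟩ := hrec [r] hrf n
    have : e m = r := (factorAt_cons.mp hm').1.symm
    have h2 := halt (m - n)
    rw [show n + (m - n) = m by omega, this] at h2
    rcases ite_eq_or_eq (Even (m-n)) (e n) (e (n+1)) with h | h
    · exact ha (h ▸ h2).symm
    · exact hb (h ▸ h2).symm
  · push_neg at hex
    refine ⟨e 1, fun n => ?_⟩
    have halt := alternation he.1 (a := e 0) (b := e 1) rfl rfl (hex _) (hex _)
    have h1 := halt n
    have h2 := halt (n+1)
    simp only [Nat.zero_add] at h1 h2
    rcases Nat.even_or_odd n with he' | ho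
    · right
      rw [h2, if_neg (by simp [Nat.even_add_one, he'])]
    · left
      rw [h1, if_neg (by simpa [Nat.not_even_iff_odd] using ho)]

/-- A word with period 2 is recurrent. -/
lemma recurrent_of_period_two {t : ℕ → A} (hp : ∀ n, t (n + 2) = t n) : Recurrent t := by
  have hper : ∀ d n, t (n + 2 * d) = t n := by
    intro d
    induction d with
    | zero => simp
    | succ d ih => intro n; rw [show n + 2*(d+1) = (n + 2*d) + 2 by ring, hp, ih]
  intro u hu N
  obtain ⟨i, hi⟩ := hu
  refine ⟨i + 2 * N, by omega, factorAt_of_pointwise fun j hj => ?_⟩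
  rw [factorAt_pointwise hi j hj, show i + 2*N + j = (i + j) + 2*N by ring, hper]

/-- Richness: for a non-recurrent word with separating letter x, every other letter is
avoided by some length-2 factor. -/
lemma richness {w : ℕ → A} {x : A} (sep : ∀ n, w n = x ∨ w (n+1) = x)
    (hnr : ¬ Recurrent w) : ∀ y, y ≠ x → ∃ n, w n ≠ y ∧ w (n+1) ≠ y := by
  intro y hy
  by_contra hcon
  push_neg at hcon
  apply hnr
  apply recurrent_of_period_two
  intro n
  rcases sep n with h1 | h1
  · have h2 : w (n+1) = y := hcon n (by rw [h1]; exact fun h => hy h.symm)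
    rcases sep (n+1) with h3 | h3
    · exact absurd (h3.symm.trans h2) (fun h => hy h.symm)
    · rw [h3, h1]
  · have hne : w (n+1) ≠ y := by rw [h1]; exact fun h => hy h.symm
    have h2 : w n = y := by
      by_contra hwn
      exact hne (hcon n hwn)
    have h3 : w (n+2) = y := hcon (n+1) hne
    rw [h3, h2]

/-- If an episturmian word contains a long enough segment of w then its separating
letter must be x. -/
lemma sep_of_contains {w : ℕ → A} {x : A} {e : ℕ → A} (he : Episturmian e)
    {M i₀ : ℕ} (hM : ∀ y, y ≠ x → ∃ n, n + 2 ≤ M ∧ w n ≠ y ∧ w (n+1) ≠ y)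
    (hocc : FactorAt e (seg w 0 M) i₀) : ∀ n, e n = x ∨ e (n+1) = x := by
  obtain ⟨y, hy⟩ := sep_letter_of_episturmian e he
  by_cases hxy : y = x
  · subst hxy; exact hy
  · obtain ⟨n, hn, h1, h2⟩ := hM y hxy
    exfalso
    have e1 : e (i₀ + n) = w n := by
      have := factorAt_pointwise hocc n (by simp; omega)
      simpa using this.symm
    have e2 : e (i₀ + n + 1) = w (n+1) := by
      have := factorAt_pointwise hocc (n+1) (by simp; omega)
      rw [seg_getElem] at this
      rw [← Nat.add_assoc] at this
      simpa [Nat.add_assoc] using this.symm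
    rcases hy (i₀ + n) with h | h
    · exact h1 (e1 ▸ h)
    · exact h2 (e2 ▸ h)

end EpiAux
namespace EpiAux
variable {A : Type*}

open Classical in
/-- Part D: a word all of whose factors are finite episturmian has a separating letter. -/
theorem sep_letter_episkew [Fintype A] (t : ℕ → A)
    (hfac : ∀ u, IsFactorInf t u → FiniteEpisturmian u) :
    ∃ x, ∀ n, t n = x ∨ t (n+1) = x := by
  classical
  set g : A × A → ℕ := fun p =>
    if h : ∃ n, t n = p.1 ∧ t (n+1) = p.2 then h.choose else 0 with hg
  set N : ℕ := Finset.univ.sup g with hN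
  obtain ⟨e, he, i₀, hocc⟩ := hfac (seg t 0 (N+2)) (isFactor_seg t 0 (N+2))
  obtain ⟨x, hx⟩ := sep_letter_of_episturmian e he
  refine ⟨x, fun n => ?_⟩
  have hex : ∃ m, t m = t n ∧ t (m+1) = t (n+1) := ⟨n, rfl, rfl⟩
  have hgle : g (t n, t (n+1)) ≤ N := Finset.le_sup (Finset.mem_univ _)
  set m := g (t n, t (n+1)) with hm
  have hspec : t m = t n ∧ t (m+1) = t (n+1) := by
    rw [hm, hg]
    simp only [dif_pos hex]
    exact hex.choose_spec
  have e1 : e (i₀ + m) = t m := by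
    have := factorAt_pointwise hocc m (by simp; omega)
    simpa using this.symm
  have e2 : e (i₀ + m + 1) = t (m+1) := by
    have := factorAt_pointwise hocc (m+1) (by simp; omega)
    rw [seg_getElem, ← Nat.add_assoc] at this
    simpa [Nat.add_assoc] using this.symm
  rcases hx (i₀ + m) with h | h
  · left; rw [← hspec.1, ← e1, h]
  · right; rw [← hspec.2, ← e2, h]

section Psi
variable [DecidableEq A] (x : A)

@[simp] lemma psiW_nil : psiW x ([] : List A) = [] := rfl

lemma psiW_cons (c : A) (u : List A) :
    psiW x (c :: u) = (if c = x then [x] else [x, c]) ++ psiW x u := by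
  simp [psiW]

lemma psiW_append (u v : List A) : psiW x (u ++ v) = psiW x u ++ psiW x v := by
  simp [psiW]

lemma psiW_singleton (c : A) : psiW x [c] = if c = x then [x] else [x, c] := by
  simp [psiW]

lemma psi1_eq_cons (u : List A) : ∃ r, psiW x u ++ [x] = x :: r := by
  cases u with
  | nil => exact ⟨[], rfl⟩
  | cons c u =>
    rw [psiW_cons]
    by_cases hc : c = x
    · exact ⟨psiW x u ++ [x], by simp [hc]⟩
    · exact ⟨c :: (psiW x u ++ [x]), by simp [hc]⟩

lemma psi1_head (u : List A) (h : 0 < (psiW x u ++ [x]).length) :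
    (psiW x u ++ [x])[0] = x := by
  obtain ⟨r, hr⟩ := psi1_eq_cons x u
  rw [List.getElem_of_eq hr]
  simp

/-- reversal identity -/
lemma psi1_reverse (u : List A) :
    (psiW x u ++ [x]).reverse = psiW x u.reverse ++ [x] := by
  induction u with
  | nil => simp
  | cons c u ih =>
    rw [psiW_cons, List.append_assoc, List.reverse_append, ih,
      show (c :: u).reverse = u.reverse ++ [c] from by simp, psiW_append, psiW_singleton]
    by_cases hc : c = x <;> simp [hc]

/-- prefix decoding -/
lemma psi1_prefix {u v : List A} (h : (psiW x u ++ [x]) <+: (psiW x v ++ [x])) :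
    u <+: v := by
  induction u generalizing v with
  | nil => exact List.nil_prefix
  | cons c u ih =>
    cases v with
    | nil =>
      exfalso
      have hl := h.length_le
      rw [psiW_cons] at hl
      by_cases hc : c = x <;> simp [hc] at hl
    | cons d v =>
      rw [psiW_cons, psiW_cons, List.append_assoc, List.append_assoc] at h
      obtain ⟨r, hr⟩ := psi1_eq_cons x u
      obtain ⟨r', hr'⟩ := psi1_eq_cons x v
      by_cases hc : c = x <;> by_cases hd : d = x <;>
        simp only [if_pos, if_neg, hc, hd, ite_true, ite_false,
          List.cons_append, List.nil_append, List.singleton_append] at h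
      · subst hc; subst hd
        rw [List.cons_prefix_cons] at h
        exact List.cons_prefix_cons.mpr ⟨rfl, ih h.2⟩
      · exfalso
        rw [List.cons_prefix_cons, hr] at h
        rw [List.cons_prefix_cons] at h
        exact hd (h.2.1.symm ▸ rfl)
      · exfalso
        rw [List.cons_prefix_cons, hr'] at h
        rw [List.cons_prefix_cons] at h
        exact hc h.2.1
      · rw [List.cons_prefix_cons, List.cons_prefix_cons] at h
        obtain ⟨-, hcd, h⟩ := h
        subst hcd
        exact List.cons_prefix_cons.mpr ⟨rfl, ih h⟩
end Psi

end EpiAux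
namespace EpiAux
variable {A : Type*} [DecidableEq A]

section Blocks
variable (x : A) (w : ℕ → A)

/-- position of the k-th block of `w` under de-substitution by `ψ_x`. -/
def blk : ℕ → ℕ
  | 0 => 0
  | k + 1 => blk k + (if w (blk k + 1) = x then 1 else 2)

/-- the de-substituted word. -/
def desub (k : ℕ) : A := if w (blk x w k + 1) = x then x else w (blk x w k + 1)

variable {x w}
variable (hw0 : w 0 = x) (sep : ∀ n, w n = x ∨ w (n+1) = x)

include hw0 sep in
lemma blk_x : ∀ k, w (blk x w k) = x := by
  intro k
  induction k with
  | zero => exact hw0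
  | succ k ih =>
    show w (blk x w k + _) = x
    by_cases h : w (blk x w k + 1) = x
    · rwa [if_pos h]
    · rw [if_neg h]
      rcases sep (blk x w k + 1) with h' | h'
      · exact absurd h' h
      · exact h'

lemma blk_lt (k : ℕ) : blk x w k < blk x w (k + 1) := by
  show blk x w k < blk x w k + _
  by_cases h : w (blk x w k + 1) = x <;> simp [h]

lemma blk_le_blk {k l : ℕ} (h : k ≤ l) : blk x w k ≤ blk x w l := by
  induction l with
  | zero => simp at h; simp [h]
  | succ l ih =>
    rcases Nat.lt_or_ge k (l+1) with h' | h'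
    · exact le_trans (ih (by omega)) (le_of_lt (blk_lt l))
    · have : k = l + 1 := by omega
      simp [this]

lemma self_le_blk (k : ℕ) : k ≤ blk x w k := by
  induction k with
  | zero => exact le_refl 0
  | succ k ih => have := blk_lt (x := x) (w := w) k; omega

include hw0 sep in
/-- encoding: the segment of `w` covering blocks `m..m+l` is the ψ-image of the
corresponding segment of the de-substituted word. -/
lemma encode_seg : ∀ l m,
    seg w (blk x w m) (blk x w (m + l) - blk x w m) = psiW x (seg (desub x w) m l) := by
  intro l
  induction l with
  | zero => simp
  | succ l ih =>
    intro m
    have h1 : blk x w (m + l) - blk x w m + (blk x w (m+l+1) - blk x w (m+l)) =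
        blk x w (m + (l+1)) - blk x w m := by
      have h2 := blk_le_blk (x := x) (w := w) (Nat.le_add_right m l)
      have h3 := blk_lt (x := x) (w := w) (m + l)
      rw [show m + (l+1) = m + l + 1 by omega]
      omega
    rw [seg_succ, psiW_append, ← ih m, ← h1, seg_add]
    congr 1
    · rw [show blk x w m + (blk x w (m+l) - blk x w m) = blk x w (m + l) by
        have := blk_le_blk (x := x) (w := w) (Nat.le_add_right m l); omega]
      set n := m + l with hn
      rw [psiW_singleton]
      have hd : blk x w (n+1) - blk x w n = (if w (blk x w n + 1) = x then 1 else 2) := by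
        show blk x w n + _ - blk x w n = _
        exact Nat.add_sub_cancel_left _ _
      rw [hd]
      by_cases h : w (blk x w n + 1) = x
      · rw [if_pos h, if_pos (show desub x w n = x by rw [desub, if_pos h])]
        rw [show (1:ℕ) = 0 + 1 by rfl, seg_succ]
        simp [blk_x hw0 sep]
      · rw [if_neg h, if_neg (show ¬ desub x w n = x by rw [desub, if_neg h]; exact h)]
        rw [show (2:ℕ) = 1 + 1 by rfl, seg_succ, show (1:ℕ) = 0 + 1 by rfl, seg_succ]
        simp only [seg_zero, List.nil_append, Nat.add_zero, Nat.zero_add]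
        rw [blk_x hw0 sep, desub, if_neg h]
        rfl

include hw0 sep in
lemma desub_isMorphImage : IsMorphImage (psiW x) (desub x w) w := by
  intro k
  have h := encode_seg hw0 sep k 0
  simp only [Nat.zero_add] at h
  show psiW x (prefixList (desub x w) k) = prefixList w _
  rw [prefixList_eq_seg, ← h]
  show seg w (blk x w 0) _ = _
  rw [show blk x w 0 = 0 from rfl, Nat.sub_zero, prefixList_eq_seg, seg_length]

omit hw0 sep in
/-- every position carrying the letter x is a block start. -/
lemma pos_block {p : ℕ} (hp : w p = x) : ∃ k, blk x w k = p := by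
  have key : ∀ p, ∃ k, blk x w k ≤ p ∧ p < blk x w (k+1) := by
    intro p
    induction p with
    | zero => exact ⟨0, le_refl 0, blk_lt 0⟩
    | succ p ih =>
      obtain ⟨k, h1, h2⟩ := ih
      rcases Nat.lt_or_ge (p+1) (blk x w (k+1)) with h | h
      · exact ⟨k, by omega, h⟩
      · have : blk x w (k+1) = p + 1 := by omega
        exact ⟨k+1, by omega, this ▸ (this ▸ blk_lt (k+1))⟩
  obtain ⟨k, h1, h2⟩ := key p
  refine ⟨k, ?_⟩
  rcases Nat.eq_or_lt_of_le h1 with h | h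
  · exact h
  · exfalso
    have hblk : blk x w (k+1) = blk x w k + (if w (blk x w k + 1) = x then 1 else 2) := rfl
    by_cases hc : w (blk x w k + 1) = x
    · rw [hblk, if_pos hc] at h2; omega
    · rw [hblk, if_neg hc] at h2
      have : p = blk x w k + 1 := by omega
      exact hc (this ▸ hp)

omit hw0 sep in
/-- decoding: a ψ-image factor occurring at a block start decodes. -/
lemma decode : ∀ (u : List A) (k : ℕ),
    FactorAt w (psiW x u ++ [x]) (blk x w k) → FactorAt (desub x w) u k := by
  intro u
  induction u with
  | nil => intro k _; exact factorAt_nil _ _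
  | cons c u ih =>
    intro k h
    rw [psiW_cons, List.append_assoc] at h
    rw [factorAt_append] at h
    obtain ⟨h1, h2⟩ := h
    rw [factorAt_cons]
    by_cases hc : c = x
    · rw [if_pos hc] at h1 h2
      simp only [List.length_singleton] at h2
      have hx1 : w (blk x w k + 1) = x := by
        obtain ⟨r, hr⟩ := psi1_eq_cons x u
        have := factorAt_pointwise h2 0 (by rw [hr]; simp)
        rw [List.getElem_of_eq hr (by simp)] at this
        simpa using this.symm
      have hblk : blk x w (k+1) = blk x w k + 1 := by
        show blk x w k + _ = _
        rw [if_pos hx1]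
      constructor
      · rw [hc, desub, if_pos hx1]
      · exact ih (k+1) (hblk ▸ h2)
    · rw [if_neg hc] at h1 h2
      simp only [List.length_cons, List.length_singleton] at h2
      have hx1 : w (blk x w k + 1) = c := by
        have := factorAt_pointwise h1 1 (by simp)
        simpa using this.symm
      have hcx : ¬ w (blk x w k + 1) = x := by rw [hx1]; exact hc
      have hblk : blk x w (k+1) = blk x w k + 2 := by
        show blk x w k + _ = _
        rw [if_neg hcx]
      constructor
      · rw [desub, if_neg hcx, hx1]
      · exact ih (k+1) (by rw [hblk]; exact h2)

include hw0 sep in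
/-- encoding at factor level: factors of the de-substituted word lift. -/
lemma encode_factor {u : List A} {k : ℕ} (h : FactorAt (desub x w) u k) :
    FactorAt w (psiW x u ++ [x]) (blk x w k) := by
  rw [factorAt_def] at h
  rw [factorAt_append]
  constructor
  · have := encode_seg hw0 sep u.length k
    rw [← h] at this
    rw [factorAt_def, ← this, seg_length]
  · have hlen : (psiW x u).length = blk x w (k + u.length) - blk x w k := by
      have := encode_seg hw0 sep u.length k
      rw [← h] at this
      rw [← this, seg_length]
    rw [hlen]
    apply factorAt_of_pointwise
    intro j hj
    simp only [List.length_singleton] at hj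
    have hj0 : j = 0 := by omega
    subst hj0
    have hle := blk_le_blk (x := x) (w := w) (Nat.le_add_right k u.length)
    rw [show blk x w k + (blk x w (k + u.length) - blk x w k) + 0 = blk x w (k + u.length) by omega]
    simp [blk_x hw0 sep]

end Blocks
end EpiAux
namespace EpiAux
variable {A : Type*}

lemma rs_suffix {t : ℕ → A} {u v : List A} (h : RightSpecial t v) (hs : u <:+ v) :
    RightSpecial t u := by
  obtain ⟨a, b, hab, ha, hb⟩ := h
  obtain ⟨p, hp⟩ := hs
  refine ⟨a, b, hab, ?_, ?_⟩
  · exact isFactor_of_infix ha ⟨p, [], by rw [← hp]; simp⟩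
  · exact isFactor_of_infix hb ⟨p, [], by rw [← hp]; simp⟩

variable [DecidableEq A]

lemma lift_ext {x : A} {w : ℕ → A} (hw0 : w 0 = x) (sep : ∀ n, w n = x ∨ w (n+1) = x)
    {u : List A} {a : A} (h : IsFactorInf (desub x w) (u ++ [a])) :
    IsFactorInf w ((psiW x u ++ [x]) ++ [a]) := by
  obtain ⟨k, hk⟩ := h
  have he := encode_factor hw0 sep hk
  rw [psiW_append, psiW_singleton] at he
  by_cases ha : a = x
  · subst ha
    rw [if_pos rfl] at he
    exact ⟨_, he⟩
  · rw [if_neg ha] at he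
    refine isFactor_of_infix ⟨_, he⟩ ?_
    refine ⟨[], [x], ?_⟩
    simp

/-- The de-substituted word of an episturmian word (starting with its separating letter)
is episturmian. -/
theorem episturmian_desub {x : A} {e : ℕ → A} (he : Episturmian e) (he0 : e 0 = x)
    (sep : ∀ n, e n = x ∨ e (n+1) = x) : Episturmian (desub x e) := by
  have hdecode : ∀ (u : List A), IsFactorInf e (psiW x u ++ [x]) →
      IsFactorInf (desub x e) u := by
    intro u ⟨j, hj⟩
    have hjx : e j = x := by
      have h0 := factorAt_pointwise hj 0 (by simp)
      have h1 := psi1_head x u (by simp)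
      have := h1.symm.trans h0
      simpa using this.symm
    obtain ⟨k, hk⟩ := pos_block (x := x) (w := e) hjx
    exact ⟨k, decode u k (hk ▸ hj)⟩
  constructor
  · intro u hu
    obtain ⟨k, hk⟩ := hu
    have hF : IsFactorInf e (psiW x u ++ [x]) := ⟨_, encode_factor he0 sep hk⟩
    have hR := he.1 _ hF
    rw [psi1_reverse] at hR
    exact hdecode _ hR
  · intro u v hu hv hlen
    obtain ⟨a, b, hab, hua, hub⟩ := hu
    obtain ⟨a', b', hab', hva, hvb⟩ := hv
    set U := psiW x u ++ [x] with hU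
    set V := psiW x v ++ [x] with hV
    have hUrs : RightSpecial e U := ⟨a, b, hab, lift_ext he0 sep hua, lift_ext he0 sep hub⟩
    have hVrs : RightSpecial e V := ⟨a', b', hab', lift_ext he0 sep hva, lift_ext he0 sep hvb⟩
    have key : ∀ (U' V' : List A), RightSpecial e U' → RightSpecial e V' →
        U'.length ≤ V'.length → U' <:+ V' := by
      intro U' V' h1 h2 hle
      have hsuf : V'.drop (V'.length - U'.length) <:+ V' := List.drop_suffix _ _
      have h3 : RightSpecial e (V'.drop (V'.length - U'.length)) := rs_suffix h2 hsuf
      have h4 : U' = V'.drop (V'.length - U'.length) := he.2 _ _ h1 h3 (by simp; omega)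
      rw [h4]; exact hsuf
    have conc : ∀ (u' v' : List A), (psiW x u' ++ [x]) <:+ (psiW x v' ++ [x]) →
        u'.length = v'.length → u' = v' := by
      intro u' v' hs hl
      rw [← List.reverse_prefix, psi1_reverse, psi1_reverse] at hs
      have := psi1_prefix x hs
      have := this.eq_of_length (by simpa using hl)
      simpa using congrArg List.reverse this
    rcases le_total U.length V.length with h | h
    · exact conc u v (key U V hUrs hVrs h) hlen
    · exact (conc v u (key V U hVrs hUrs h) hlen.symm).symm
end EpiAux
namespace EpiAux
variable {A : Type*}

lemma factorAt_consInf_shift {x : A} {e : ℕ → A} {u : List A} {i : ℕ}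
    (h : FactorAt e u i) : FactorAt (consInf x e) u (i + 1) := by
  apply factorAt_of_pointwise
  intro j hj
  rw [factorAt_pointwise h j hj]
  show e (i + j) = consInf x e (i + 1 + j)
  rw [show i + 1 + j = (i + j) + 1 by omega]
  rfl

lemma factorAt_consInf_down {x : A} {e : ℕ → A} {u : List A} {j : ℕ}
    (h : FactorAt (consInf x e) u (j + 1)) : FactorAt e u j := by
  apply factorAt_of_pointwise
  intro r hr
  rw [factorAt_pointwise h r hr]
  show consInf x e (j + 1 + r) = e (j + r)
  rw [show j + 1 + r = (j + r) + 1 by omega]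
  rfl

lemma factorAt_consInf_zero {x : A} {e : ℕ → A} {c : A} {v : List A}
    (h : FactorAt (consInf x e) (c :: v) 0) : c = x ∧ FactorAt e v 0 := by
  rw [factorAt_cons] at h
  exact ⟨h.1, factorAt_consInf_down h.2⟩

/-- G7: factors of x·e are factors of e when e is episturmian with separating
letter x and e does not start with x. -/
lemma consInf_factor_subset {x : A} {e : ℕ → A} (he : Episturmian e)
    (sep_e : ∀ n, e n = x ∨ e (n+1) = x) (he0 : e 0 ≠ x) :
    ∀ u, IsFactorInf (consInf x e) u → IsFactorInf e u := by
  have hrec : Recurrent e := recurrent_of_rev_closed e he.1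
  rintro u ⟨i, hi⟩
  match i with
  | (j+1) => exact ⟨j, factorAt_consInf_down hi⟩
  | 0 =>
    cases u with
    | nil => exact ⟨0, factorAt_nil e 0⟩
    | cons c v =>
      obtain ⟨hcx, hv⟩ := factorAt_consInf_zero hi
      rw [hcx]
      obtain ⟨j, hj1, hj⟩ := hrec v ⟨0, hv⟩ 1
      cases v with
      | nil =>
        rcases sep_e 0 with h | h
        · exact absurd h he0
        · refine ⟨1, ?_⟩
          rw [factorAt_cons]
          exact ⟨h.symm, factorAt_nil e 2⟩
      | cons d v' =>
        have hd : d = e 0 := (factorAt_cons.mp hv).1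
        have hdj : e j = d := ((factorAt_cons.mp hj).1).symm
        have hjx : e (j - 1) = x := by
          rcases sep_e (j - 1) with h | h
          · exact h
          · rw [show j - 1 + 1 = j by omega, hdj, hd] at h
            exact absurd h he0
        refine ⟨j - 1, ?_⟩
        rw [factorAt_cons]
        exact ⟨hjx.symm, by rw [show j - 1 + 1 = j by omega]; exact hj⟩

lemma episturmian_consInf {x : A} {e : ℕ → A} (he : Episturmian e)
    (sep_e : ∀ n, e n = x ∨ e (n+1) = x) (he0 : e 0 ≠ x) :
    Episturmian (consInf x e) := by
  have hsub := consInf_factor_subset he sep_e he0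
  have hup : ∀ u, IsFactorInf e u → IsFactorInf (consInf x e) u := by
    rintro u ⟨i, hi⟩
    exact ⟨i + 1, factorAt_consInf_shift hi⟩
  constructor
  · intro u hu
    exact hup _ (he.1 _ (hsub _ hu))
  · intro u v hu hv hlen
    obtain ⟨a, b, hab, ha, hb⟩ := hu
    obtain ⟨a', b', hab', ha', hb'⟩ := hv
    exact he.2 u v ⟨a, b, hab, hsub _ ha, hsub _ hb⟩
      ⟨a', b', hab', hsub _ ha', hsub _ hb'⟩ hlen

lemma sep_consInf {x : A} {e : ℕ → A} (sep_e : ∀ n, e n = x ∨ e (n+1) = x) :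
    ∀ n, consInf x e n = x ∨ consInf x e (n+1) = x := by
  intro n
  cases n with
  | zero => exact Or.inl rfl
  | succ m => exact sep_e m

variable [DecidableEq A]

/-- MAIN STEP for a word starting with its separating letter. -/
theorem step_main [Fintype A] {x : A} {w : ℕ → A} (hw0 : w 0 = x)
    (sep : ∀ n, w n = x ∨ w (n+1) = x)
    (hnr : ¬ Recurrent w) (hfac : ∀ u, IsFactorInf w u → FiniteEpisturmian u) :
    ∃ s : ℕ → A, ¬ Recurrent s ∧ (∀ u, IsFactorInf s u → FiniteEpisturmian u) ∧
      IsMorphImage (psiW x) s w := by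
  classical
  refine ⟨desub x w, ?_, ?_, desub_isMorphImage hw0 sep⟩
  · -- non-recurrence of the de-substituted word
    intro hres
    apply hnr
    intro u hu N
    obtain ⟨i, hi⟩ := hu
    set k := i + u.length with hk
    have hP : IsFactorInf (desub x w) (seg (desub x w) 0 k) := isFactor_seg _ 0 k
    obtain ⟨m, hm, hm'⟩ := hres _ hP N
    have hseg : seg (desub x w) m k = seg (desub x w) 0 k := by
      rw [factorAt_def, seg_length] at hm'
      exact hm'.symm
    have eq1 := encode_seg hw0 sep k 0
    have eq2 := encode_seg hw0 sep k m
    simp only [Nat.zero_add] at eq1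
    rw [hseg] at eq2
    have hblk0 : blk x w 0 = 0 := rfl
    rw [hblk0, Nat.sub_zero] at eq1
    have hDs : seg w (blk x w m) (blk x w (m + k) - blk x w m) = seg w 0 (blk x w k) :=
      eq2.trans eq1.symm
    have hD : blk x w (m + k) - blk x w m = blk x w k := by
      have := congrArg List.length hDs
      simpa using this
    have hpw : ∀ r, r < blk x w k → w (blk x w m + r) = w r := by
      intro r hr
      have h1 := List.getElem_of_eq hDs (by rw [seg_length, hD]; exact hr)
      rw [seg_getElem, seg_getElem] at h1
      simpa using h1
    refine ⟨blk x w m + i, by have := self_le_blk (x := x) (w := w) m; omega, ?_⟩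
    apply factorAt_of_pointwise
    intro j hj
    rw [factorAt_pointwise hi j hj]
    have hlt : i + j < blk x w k := by
      have := self_le_blk (x := x) (w := w) k
      omega
    rw [← hpw (i + j) hlt]
    congr 1
    omega
  · -- factors are finite episturmian
    intro u hu
    obtain ⟨k₁, hk₁⟩ := hu
    have hΨ : FactorAt w (psiW x u ++ [x]) (blk x w k₁) := encode_factor hw0 sep hk₁
    have hrich := richness sep hnr
    set g : A → ℕ := fun y => if h : ∃ n, w n ≠ y ∧ w (n+1) ≠ y then h.choose else 0 with hg
    set N := Finset.univ.sup g with hN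
    set L := (psiW x u ++ [x]).length with hL
    set M := max (blk x w k₁ + L) (N + 2) with hM
    have hMrich : ∀ y, y ≠ x → ∃ n, n + 2 ≤ M ∧ w n ≠ y ∧ w (n+1) ≠ y := by
      intro y hy
      have hex : ∃ n, w n ≠ y ∧ w (n+1) ≠ y := hrich y hy
      refine ⟨g y, ?_, ?_⟩
      · have h1 : g y ≤ N := Finset.le_sup (Finset.mem_univ y)
        omega
      · rw [hg]
        simp only [dif_pos hex]
        exact hex.choose_spec
    obtain ⟨e, he, i₀, hocc⟩ := hfac (seg w 0 M) (isFactor_seg w 0 M)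
    have sep_e : ∀ n, e n = x ∨ e (n+1) = x := sep_of_contains he hMrich hocc
    obtain ⟨E, hE, hE0, sepE, i₁, hocc1⟩ :
        ∃ E, Episturmian E ∧ E 0 = x ∧ (∀ n, E n = x ∨ E (n+1) = x) ∧
          ∃ i₁, FactorAt E (seg w 0 M) i₁ := by
      by_cases he0 : e 0 = x
      · exact ⟨e, he, he0, sep_e, i₀, hocc⟩
      · exact ⟨consInf x e, episturmian_consInf he sep_e he0, rfl, sep_consInf sep_e,
          i₀ + 1, factorAt_consInf_shift hocc⟩
    have hΨE : FactorAt E (psiW x u ++ [x]) (i₁ + blk x w k₁) := by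
      apply factorAt_of_pointwise
      intro j hj
      rw [factorAt_pointwise hΨ j hj]
      have hbd : blk x w k₁ + j < M := by
        rw [hM]
        have : j < L := hj
        omega
      have h1 := factorAt_pointwise hocc1 (blk x w k₁ + j) (by simpa using hbd)
      rw [seg_getElem] at h1
      rw [Nat.zero_add] at h1
      rw [h1]
      congr 1
      omega
    have hEx : E (i₁ + blk x w k₁) = x := by
      have h0 := factorAt_pointwise hΨE 0 (by simp)
      have h1 := psi1_head x u (by simp)
      have := h1.symm.trans h0
      simpa using this.symm
    obtain ⟨κ, hκ⟩ := pos_block (x := x) (w := E) hEx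
    have hdec : FactorAt (desub x E) u κ := decode u κ (hκ ▸ hΨE)
    exact ⟨desub x E, episturmian_desub hE hE0 sepE, κ, hdec⟩

/-- THE STEP: one de-substitution of an episkew word. -/
theorem step [Fintype A] (t : ℕ → A) (hnr : ¬ Recurrent t)
    (hfac : ∀ u, IsFactorInf t u → FiniteEpisturmian u) :
    ∃ (x : A) (s : ℕ → A), ¬ Recurrent s ∧ (∀ u, IsFactorInf s u → FiniteEpisturmian u) ∧
      IsMorphImage (psiW x) s (if t 0 = x then t else consInf x t) := by
  classical
  obtain ⟨x, sep⟩ := sep_letter_episkew t hfac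
  refine ⟨x, ?_⟩
  by_cases h0 : t 0 = x
  · rw [if_pos h0]
    obtain ⟨s, h1, h2, h3⟩ := step_main h0 sep hnr hfac
    exact ⟨s, h1, h2, h3⟩
  · rw [if_neg h0]
    set w := consInf x t with hw
    have hw0 : w 0 = x := rfl
    have sep_w : ∀ n, w n = x ∨ w (n+1) = x := sep_consInf sep
    have hnr_w : ¬ Recurrent w := by
      intro hr
      apply hnr
      intro u hu N
      obtain ⟨i, hi⟩ := hu
      obtain ⟨j, hj1, hj⟩ := hr u ⟨i + 1, factorAt_consInf_shift hi⟩ (N + 1)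
      refine ⟨j - 1, by omega, ?_⟩
      have := factorAt_consInf_down (x := x) (e := t) (u := u) (j := j - 1)
      rw [show j - 1 + 1 = j by omega] at this
      exact this hj
    have hfac_w : ∀ u, IsFactorInf w u → FiniteEpisturmian u := by
      rintro u ⟨i, hi⟩
      match i with
      | (j + 1) => exact hfac u ⟨j, factorAt_consInf_down hi⟩
      | 0 =>
        cases u with
        | nil => exact hfac [] ⟨0, factorAt_nil t 0⟩
        | cons c v =>
          obtain ⟨hcx, hv⟩ := factorAt_consInf_zero hi
          rw [hcx]
          -- G5 : x :: v is finite episturmian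
          have hrich := richness sep hnr
          set g : A → ℕ := fun y => if h : ∃ n, t n ≠ y ∧ t (n+1) ≠ y then h.choose else 0
            with hg
          set N := Finset.univ.sup g with hN
          set M := max v.length (N + 2) with hM
          have hMrich : ∀ y, y ≠ x → ∃ n, n + 2 ≤ M ∧ t n ≠ y ∧ t (n+1) ≠ y := by
            intro y hy
            have hex : ∃ n, t n ≠ y ∧ t (n+1) ≠ y := hrich y hy
            refine ⟨g y, ?_, ?_⟩
            · have h1 : g y ≤ N := Finset.le_sup (Finset.mem_univ y)
              omega
            · rw [hg]
              simp only [dif_pos hex]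
              exact hex.choose_spec
          obtain ⟨e, he, i₀, hocc⟩ := hfac (seg t 0 M) (isFactor_seg t 0 M)
          have sep_e : ∀ n, e n = x ∨ e (n+1) = x := sep_of_contains he hMrich hocc
          have hrec_e : Recurrent e := recurrent_of_rev_closed e he.1
          obtain ⟨j, hj1, hj⟩ := hrec_e (seg t 0 M) ⟨i₀, hocc⟩ 1
          have hjt : e j = t 0 := by
            have := factorAt_pointwise hj 0 (by simp; omega)
            rw [seg_getElem] at this
            simpa using this.symm
          have hjx : e (j - 1) = x := by
            rcases sep_e (j - 1) with h | h
            · exact h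
            · rw [show j - 1 + 1 = j by omega, hjt] at h
              exact absurd h h0
          have hxq : FactorAt e (x :: seg t 0 M) (j - 1) := by
            rw [factorAt_cons]
            exact ⟨hjx.symm, by rw [show j - 1 + 1 = j by omega]; exact hj⟩
          have hv' : x :: v <+: x :: seg t 0 M := by
            apply List.cons_prefix_cons.mpr
            refine ⟨rfl, ?_⟩
            have : v = seg t 0 v.length := hv
            rw [this]
            exact seg_prefix t 0 (by omega)
          exact ⟨e, he, isFactor_of_infix ⟨j - 1, hxq⟩ hv'.isInfix⟩
    obtain ⟨s, h1, h2, h3⟩ := step_main hw0 sep_w hnr_w hfac_w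
    exact ⟨s, h1, h2, h3⟩

end EpiAux
/-- If `t` is a non-recurrent infinite word with `Alph(t) = A` all of whose
factors are finite episturmian, then there exist non-recurrent infinite words `t⁽ⁱ⁾` and
letters `x₁, x₂, …` with `t⁽⁰⁾ = t` and `t'⁽ⁱ⁻¹⁾ = ψ_{xᵢ}(t⁽ⁱ⁾)`, where `t'⁽ⁱ⁻¹⁾ = t⁽ⁱ⁻¹⁾`
if `t⁽ⁱ⁻¹⁾` begins with `xᵢ` and `t'⁽ⁱ⁻¹⁾ = xᵢ·t⁽ⁱ⁻¹⁾` otherwise. -/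
theorem episkew_decomposition {A : Type*} [Fintype A] [DecidableEq A] (t : ℕ → A)
    (hAlph : ∀ a : A, ∃ n, t n = a)
    (hrec : ¬ Recurrent t) (hfac : ∀ u, IsFactorInf t u → FiniteEpisturmian u) :
    ∃ (ts : ℕ → ℕ → A) (x : ℕ → A),
      ts 0 = t ∧ (∀ i, ¬ Recurrent (ts i)) ∧
      ∀ i : ℕ, IsMorphImage (psiW (x (i + 1))) (ts (i + 1))
        (if ts i 0 = x (i + 1) then ts i else consInf (x (i + 1)) (ts i)) := by
  classical
  set Q : (ℕ → A) → Prop :=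
    fun s => ¬ Recurrent s ∧ ∀ u, IsFactorInf s u → FiniteEpisturmian u with hQ
  have hstep : ∀ s : {s : ℕ → A // Q s}, ∃ (x : A) (s' : {s : ℕ → A // Q s}),
      IsMorphImage (psiW x) s'.1 (if s.1 0 = x then s.1 else consInf x s.1) := by
    rintro ⟨s, hs1, hs2⟩
    obtain ⟨x, s', h1, h2, h3⟩ := EpiAux.step s hs1 hs2
    exact ⟨x, ⟨s', h1, h2⟩, h3⟩
  choose X S hXS using hstep
  have hQt : Q t := ⟨hrec, hfac⟩
  let g : ℕ → {s : ℕ → A // Q s} := fun n => Nat.rec ⟨t, hQt⟩ (fun _ p => S p) n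
  refine ⟨fun i => (g i).1, fun i => Nat.rec (t 0) (fun j _ => X (g j)) i, rfl,
    fun i => (g i).2.1, fun i => ?_⟩
  exact hXS (g i)
end

section
/- Let t be an infinite word with Alph(t) = A, and suppose there exist an infinite sequence (t^(i))_{i≥0} of non-recurrent infinite words and letters x_1, x_2, x_3, … in A such that t^(0) = t and, for every i ≥ 1, t'^(i−1) = ψ_{x_i}(t^(i)), where t'^(i−1) = t^(i−1) if t^(i−1) begins with x_i and t'^(i−1) = x_i·t^(i−1) otherwise. Then there exist a letter x ∈ A, a standard episturmian word s over A \ {x}, a pure epistandard morphism μ on A, a natural number p, and a non-empty suffix v of μ(s̃_p x) such that t = v·μ(s). -/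
/-! ### Part 1: basic infrastructure -/

section Basics
variable {A : Type*}

theorem prefixList_length (t : ℕ → A) (k : ℕ) : (prefixList t k).length = k := by
  simp [prefixList]

theorem prefixList_zero (t : ℕ → A) : prefixList t 0 = [] := rfl

theorem prefixList_getElem (t : ℕ → A) {k i : ℕ} (h : i < (prefixList t k).length) :
    (prefixList t k)[i] = t i := by
  simp [prefixList]

theorem prefixList_succ (t : ℕ → A) (k : ℕ) :
    prefixList t (k+1) = prefixList t k ++ [t k] := by
  simp [prefixList, List.range_succ]

theorem prefixList_take (t : ℕ → A) {k l : ℕ} (h : k ≤ l) :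
    (prefixList t l).take k = prefixList t k := by
  apply List.ext_getElem
  · simp [prefixList_length]; omega
  · intro i h1 h2
    simp only [List.getElem_take, prefixList_getElem]

theorem prefixList_prefix (t : ℕ → A) {k l : ℕ} (h : k ≤ l) :
    prefixList t k <+: prefixList t l := by
  rw [← prefixList_take t h]; exact List.take_prefix _ _

theorem factorAt_iff {t : ℕ → A} {u : List A} {i : ℕ} :
    FactorAt t u i ↔ ∀ j (h : j < u.length), u[j] = t (i + j) := by
  constructor
  · intro h j hj
    have : u[j] = ((List.range u.length).map (fun j => t (i + j)))[j]'(by simpa using hj) :=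
      List.getElem_of_eq h hj
    simpa using this
  · intro h
    apply List.ext_getElem (by simp)
    intro j h1 h2
    simp only [List.getElem_map, List.getElem_range]
    exact h j h1

theorem factorAt_nil (t : ℕ → A) (i : ℕ) : FactorAt t [] i := rfl

theorem factorAt_prefixList (t : ℕ → A) (k : ℕ) : FactorAt t (prefixList t k) 0 := by
  rw [factorAt_iff]
  intro j hj
  simp [prefixList_getElem]

theorem prefixList_add (t : ℕ → A) (i k : ℕ) :
    prefixList t (i + k) = prefixList t i ++ (List.range k).map (fun j => t (i + j)) := by
  simp [prefixList, List.range_add, Function.comp]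

theorem factorAt_iff_prefixList {t : ℕ → A} {u : List A} {i : ℕ} :
    FactorAt t u i ↔ prefixList t (i + u.length) = prefixList t i ++ u := by
  rw [prefixList_add, FactorAt]
  constructor
  · intro h; rw [← h]
  · intro h
    exact (List.append_cancel_left h).symm

theorem factorAt_append {t : ℕ → A} {u v : List A} {i : ℕ} :
    FactorAt t (u ++ v) i ↔ FactorAt t u i ∧ FactorAt t v (i + u.length) := by
  simp only [factorAt_iff]
  constructor
  · intro h
    refine ⟨fun j hj => ?_, fun j hj => ?_⟩
    · have := h j (by simp; omega)
      rwa [List.getElem_append_left hj] at this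
    · have := h (u.length + j) (by simp; omega)
      rw [List.getElem_append_right (by omega)] at this
      simpa [Nat.add_assoc] using this
  · intro ⟨h1, h2⟩ j hj
    rcases Nat.lt_or_ge j u.length with hj' | hj'
    · rw [List.getElem_append_left hj']; exact h1 j hj'
    · rw [List.getElem_append_right hj']
      have := h2 (j - u.length) (by simp at hj; omega)
      rw [this]; congr 1; omega

theorem factorAt_infix {t : ℕ → A} {p u s : List A} {i : ℕ}
    (h : FactorAt t (p ++ u ++ s) i) : FactorAt t u (i + p.length) :=
  ((factorAt_append.1 ((factorAt_append (u := p ++ u)).1 h).1).2)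

theorem isFactorInf_infix {t : ℕ → A} {u v : List A} (h : u <:+: v)
    (hv : IsFactorInf t v) : IsFactorInf t u := by
  obtain ⟨i, hi⟩ := hv
  obtain ⟨p, s, rfl⟩ := h
  exact ⟨i + p.length, factorAt_infix hi⟩

theorem factorAt_prefix {t : ℕ → A} {u v : List A} {i : ℕ} (h : u <+: v)
    (hv : FactorAt t v i) : FactorAt t u i := by
  obtain ⟨s, rfl⟩ := h
  exact (factorAt_append.1 hv).1

theorem factorAt_getElem {t : ℕ → A} {u : List A} {i j : ℕ} (h : FactorAt t u i)
    (hj : j < u.length) : u[j] = t (i + j) := factorAt_iff.1 h j hj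

theorem isPrefixInf_iff_factorAt {u : List A} {t : ℕ → A} :
    IsPrefixInf u t ↔ FactorAt t u 0 := by
  simp [IsPrefixInf, FactorAt, prefixList]

theorem isPrefixInf_prefixList (t : ℕ → A) (k : ℕ) : IsPrefixInf (prefixList t k) t := by
  rw [isPrefixInf_iff_factorAt]; exact factorAt_prefixList t k

theorem isPrefixInf_prefix {u v : List A} {t : ℕ → A} (h : u <+: v) (hv : IsPrefixInf v t) :
    IsPrefixInf u t := by
  rw [isPrefixInf_iff_factorAt] at *
  exact factorAt_prefix h hv

theorem isPrefixInf_getElem {u : List A} {t : ℕ → A} (h : IsPrefixInf u t) {j : ℕ}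
    (hj : j < u.length) : u[j] = t j := by
  rw [isPrefixInf_iff_factorAt] at h
  simpa using factorAt_getElem h hj

theorem isPrefixInf_eq_prefixList {u : List A} {t : ℕ → A} (h : IsPrefixInf u t) :
    u = prefixList t u.length := h

theorem isPrefixInf_of_eq_length {u v : List A} {t : ℕ → A} (hu : IsPrefixInf u t)
    (hv : IsPrefixInf v t) (h : u.length = v.length) : u = v := by
  rw [hu, hv, h]

theorem isPrefixInf_prefix_of_le {u v : List A} {t : ℕ → A} (hu : IsPrefixInf u t)
    (hv : IsPrefixInf v t) (h : u.length ≤ v.length) : u <+: v := by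
  rw [hu, hv]; exact prefixList_prefix t h

theorem factorAt_infix_prefixList {t : ℕ → A} {u : List A} {i : ℕ} (h : FactorAt t u i) :
    u <:+: prefixList t (i + u.length) := by
  rw [factorAt_iff_prefixList.1 h]
  exact ⟨prefixList t i, [], by simp⟩

theorem isFactorInf_of_infix_prefixList {t : ℕ → A} {u : List A} {k : ℕ}
    (h : u <:+: prefixList t k) : IsFactorInf t u := by
  obtain ⟨p, s, hps⟩ := h
  have := factorAt_infix (t := t) (i := 0) (p := p) (u := u) (s := s)
    (by rw [hps]; exact factorAt_prefixList t k)
  exact ⟨0 + p.length, this⟩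

theorem isFactorInf_prefixList (t : ℕ → A) (k : ℕ) : IsFactorInf t (prefixList t k) :=
  ⟨0, factorAt_prefixList t k⟩

theorem isFactorInf_of_isPrefixInf {t : ℕ → A} {u : List A} (h : IsPrefixInf u t) :
    IsFactorInf t u := ⟨0, isPrefixInf_iff_factorAt.1 h⟩

/-! consInf lemmas -/

theorem consInf_zero (c : A) (v : ℕ → A) : consInf c v 0 = c := rfl

theorem consInf_succ (c : A) (v : ℕ → A) (n : ℕ) : consInf c v (n+1) = v n := rfl

theorem consInf_shift (v : ℕ → A) : consInf (v 0) (fun n => v (n+1)) = v := by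
  funext n; cases n <;> rfl

theorem prefixList_consInf (c : A) (v : ℕ → A) (k : ℕ) :
    prefixList (consInf c v) (k+1) = c :: prefixList v k := by
  apply List.ext_getElem (by simp [prefixList_length])
  intro i h1 h2
  cases i with
  | zero => simp [prefixList_getElem]; rfl
  | succ j =>
    rw [prefixList_getElem]
    simp only [List.getElem_cons_succ, prefixList_getElem]
    rfl

theorem factorAt_consInf_succ {c : A} {v : ℕ → A} {u : List A} {i : ℕ} :
    FactorAt (consInf c v) u (i+1) ↔ FactorAt v u i := by
  simp only [factorAt_iff]
  constructor <;> intro h j hj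
  · have := h j hj
    rwa [show i + 1 + j = (i + j) + 1 by omega, consInf_succ] at this
  · rw [show i + 1 + j = (i + j) + 1 by omega, consInf_succ]
    exact h j hj

/-! wordAppend lemmas -/

theorem wordAppend_lt {d : List A} {v : ℕ → A} {n : ℕ} (h : n < d.length) :
    wordAppend d v n = d[n] := by
  simp [wordAppend, h]

theorem wordAppend_ge {d : List A} {v : ℕ → A} {n : ℕ} (h : d.length ≤ n) :
    wordAppend d v n = v (n - d.length) := by
  simp [wordAppend, Nat.not_lt.2 h]

theorem wordAppend_add (d : List A) (v : ℕ → A) (n : ℕ) :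
    wordAppend d v (d.length + n) = v n := by
  rw [wordAppend_ge (by omega)]
  congr 1; omega

theorem wordAppend_nil (v : ℕ → A) : wordAppend [] v = v := by
  funext n; simp [wordAppend]

theorem wordAppend_append (d e : List A) (v : ℕ → A) :
    wordAppend (d ++ e) v = wordAppend d (wordAppend e v) := by
  funext n
  rcases Nat.lt_or_ge n d.length with h | h
  · rw [wordAppend_lt (by simp; omega), wordAppend_lt h, List.getElem_append_left h]
  · rcases Nat.lt_or_ge n (d.length + e.length) with h2 | h2
    · rw [wordAppend_lt (by simp; omega), wordAppend_ge h, wordAppend_lt (by omega),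
        List.getElem_append_right h]
    · rw [wordAppend_ge (by simp; omega), wordAppend_ge h, wordAppend_ge (by omega)]
      congr 1; simp; omega

theorem consInf_eq_wordAppend (c : A) (v : ℕ → A) : consInf c v = wordAppend [c] v := by
  funext n
  cases n with
  | zero => rw [consInf_zero, wordAppend_lt (by simp)]; rfl
  | succ m => rw [consInf_succ, wordAppend_ge (by simp)]; rfl

theorem prefixList_wordAppend (d : List A) (v : ℕ → A) (k : ℕ) :
    prefixList (wordAppend d v) (d.length + k) = d ++ prefixList v k := by
  apply List.ext_getElem (by simp [prefixList_length])
  intro i h1 h2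
  rw [prefixList_getElem]
  rcases Nat.lt_or_ge i d.length with h | h
  · rw [List.getElem_append_left h, wordAppend_lt h]
  · rw [List.getElem_append_right h, wordAppend_ge h, prefixList_getElem]

theorem wordAppend_cancel {d : List A} {a b : ℕ → A} (h : wordAppend d a = wordAppend d b) :
    a = b := by
  funext n
  have := congrFun h (d.length + n)
  rwa [wordAppend_add, wordAppend_add] at this

theorem factorAt_wordAppend {d : List A} {v : ℕ → A} {u : List A} {i : ℕ} :
    FactorAt (wordAppend d v) u (d.length + i) ↔ FactorAt v u i := by
  simp only [factorAt_iff]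
  constructor <;> intro h j hj
  · have := h j hj
    rwa [show d.length + i + j = d.length + (i + j) by omega, wordAppend_add] at this
  · rw [show d.length + i + j = d.length + (i + j) by omega, wordAppend_add]
    exact h j hj

theorem isPrefixInf_wordAppend_iff {d e : List A} {v : ℕ → A} :
    IsPrefixInf (d ++ e) (wordAppend d v) ↔ IsPrefixInf e v := by
  simp only [isPrefixInf_iff_factorAt]
  rw [factorAt_append]
  constructor
  · intro ⟨_, h2⟩
    rw [show (0:ℕ) + d.length = d.length + 0 by omega, factorAt_wordAppend] at h2
    exact h2
  · intro h
    constructor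
    · rw [factorAt_iff]
      intro j hj
      rw [show (0:ℕ) + j = j by omega, wordAppend_lt hj]
    · rw [show (0:ℕ) + d.length = d.length + 0 by omega, factorAt_wordAppend]
      exact h

end Basics


/-! ### Part 2: psiW finite lemmas -/

section PsiW
variable {A : Type*} [DecidableEq A] {z : A}

theorem psiW_nil (z : A) : psiW z [] = [] := rfl

theorem psiW_cons (z c : A) (w : List A) :
    psiW z (c :: w) = (if c = z then [z] else [z, c]) ++ psiW z w := by
  simp [psiW]

theorem psiW_singleton (z c : A) : psiW z [c] = if c = z then [z] else [z, c] := by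
  simp [psiW]

theorem psiW_append (z : A) (u v : List A) : psiW z (u ++ v) = psiW z u ++ psiW z v := by
  simp [psiW]

theorem length_psiW_ge (z : A) (w : List A) : w.length ≤ (psiW z w).length := by
  induction w with
  | nil => simp [psiW]
  | cons c w ih =>
    rw [psiW_cons]
    split <;> simp <;> omega

theorem psiW_ne_nil (z : A) {w : List A} (h : w ≠ []) : psiW z w ≠ [] := by
  cases w with
  | nil => exact absurd rfl h
  | cons c w =>
    rw [psiW_cons]
    split <;> simp

theorem psiW_cons_z (z c : A) (w : List A) :
    ∃ r, psiW z (c :: w) = z :: r := by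
  rw [psiW_cons]
  split <;> exact ⟨_, rfl⟩

theorem psiW_getElem_zero (z : A) {w : List A} (h : w ≠ []) (hl : 0 < (psiW z w).length) :
    (psiW z w)[0] = z := by
  cases w with
  | nil => exact absurd rfl h
  | cons c w =>
    obtain ⟨r, hr⟩ := psiW_cons_z z c w
    simp [hr]

theorem psiW_injective (z : A) : ∀ {v w : List A}, psiW z v = psiW z w → v = w := by
  intro v
  induction v with
  | nil =>
    intro w h
    cases w with
    | nil => rfl
    | cons d w => exact absurd h.symm (psiW_ne_nil z (List.cons_ne_nil d w))
  | cons c v ih =>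
    intro w h
    cases w with
    | nil => exact absurd h (psiW_ne_nil z (List.cons_ne_nil c v))
    | cons d w =>
      rw [psiW_cons, psiW_cons] at h
      by_cases hc : c = z <;> by_cases hd : d = z <;> simp [hc, hd] at h
      · rw [hc, hd, ih h]
      · exfalso
        cases v with
        | nil => simp [psiW_nil] at h
        | cons e v' =>
          obtain ⟨r, hr⟩ := psiW_cons_z z e v'
          rw [hr] at h
          simp at h
          exact hd h.1.symm
      · exfalso
        cases w with
        | nil => simp [psiW_nil] at h
        | cons e w' =>
          obtain ⟨r, hr⟩ := psiW_cons_z z e w'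
          rw [hr] at h
          simp at h
          exact hc h.1
      · obtain ⟨h1, h2⟩ := h
        rw [h1, ih h2]

theorem psiW_replicate (z : A) (k : ℕ) :
    psiW z (List.replicate k z) = List.replicate k z := by
  induction k with
  | zero => rfl
  | succ n ih =>
    rw [List.replicate_succ, psiW_cons, if_pos rfl, ih]
    rfl

theorem psiW_eq_replicate {z : A} : ∀ {v : List A} {k : ℕ},
    psiW z v = List.replicate k z → v = List.replicate k z := by
  intro v
  induction v with
  | nil =>
    intro k h
    have : (List.replicate k z).length = 0 := by rw [← h]; rfl
    simp at this
    simp [this]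
  | cons c v ih =>
    intro k h
    rw [psiW_cons] at h
    by_cases hc : c = z
    · rw [if_pos hc] at h
      cases k with
      | zero => simp at h
      | succ n =>
        rw [List.replicate_succ] at h
        simp only [List.singleton_append, List.cons.injEq] at h
        rw [List.replicate_succ, hc, ih h.2]
    · exfalso
      rw [if_neg hc] at h
      have hk : 2 ≤ k := by
        have := congrArg List.length h
        simp at this
        omega
      have h1 := List.getElem_of_eq h (i := 1) (by simp)
      simp at h1
      exact hc h1

theorem psiW_reverse (z : A) (w : List A) :
    z :: (psiW z w).reverse = psiW z w.reverse ++ [z] := by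
  induction w with
  | nil => rfl
  | cons c w ih =>
    rw [psiW_cons, List.reverse_append, List.reverse_cons, psiW_append]
    have hblock : [z] ++ (if c = z then [z] else [z, c]).reverse
        = psiW z [c] ++ [z] := by
      rw [psiW_singleton]
      split <;> rfl
    calc z :: ((psiW z w).reverse ++ (if c = z then [z] else [z, c]).reverse)
        = (z :: (psiW z w).reverse) ++ (if c = z then [z] else [z, c]).reverse := rfl
      _ = (psiW z w.reverse ++ [z]) ++ (if c = z then [z] else [z, c]).reverse := by rw [ih]
      _ = psiW z w.reverse ++ ([z] ++ (if c = z then [z] else [z, c]).reverse) := by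
          rw [List.append_assoc]
      _ = psiW z w.reverse ++ (psiW z [c] ++ [z]) := by rw [hblock]
      _ = psiW z w.reverse ++ psiW z [c] ++ [z] := by rw [List.append_assoc]

theorem psiW_palindrome {z : A} {w : List A} (h : w.reverse = w) :
    (psiW z w ++ [z]).reverse = psiW z w ++ [z] := by
  rw [List.reverse_append, List.reverse_singleton, List.singleton_append, psiW_reverse, h]

theorem psiW_getLast (z : A) : ∀ {w : List A}, w ≠ [] → (psiW z w).getLast? = w.getLast? := by
  intro w
  induction w with
  | nil => intro h; exact absurd rfl h
  | cons c w ih =>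
    intro _
    rw [psiW_cons]
    by_cases hw : w = []
    · subst hw
      rw [psiW_nil, List.append_nil]
      split <;> simp_all
    · obtain ⟨d, w', rfl⟩ := List.exists_cons_of_ne_nil hw
      rw [List.getLast?_append, ih (by simp), List.getLast?_cons_cons]
      have hs : ((d :: w').getLast?).isSome := by
        rw [List.getLast?_isSome]
        simp
      exact Option.or_of_isSome hs

theorem psiW_prefix_decode (z : A) : ∀ (W : List A) (u : List A), u ≠ [] → u <+: psiW z W →
    ∃ w, w <+: W ∧ (u = psiW z w ∨ u = psiW z w ++ [z]) := by
  intro W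
  induction W with
  | nil =>
    intro u hu hp
    rw [psiW_nil, List.prefix_nil] at hp
    exact absurd hp hu
  | cons c W ih =>
    intro u hu hp
    obtain ⟨s, hs⟩ := hp
    rw [psiW_cons] at hs
    cases u with
    | nil => exact absurd rfl hu
    | cons a u2 =>
      by_cases hc : c = z
      · rw [if_pos hc, List.singleton_append, List.cons_append] at hs
        injection hs with ha hs2
        by_cases hu2 : u2 = []
        · subst hu2
          exact ⟨[], ⟨c :: W, rfl⟩, Or.inr (by simp [psiW_nil, ha])⟩
        · obtain ⟨w', hw', hform⟩ := ih u2 hu2 ⟨s, hs2⟩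
          refine ⟨c :: w', List.cons_prefix_cons.mpr ⟨rfl, hw'⟩, ?_⟩
          rw [psiW_cons, if_pos hc, List.singleton_append]
          rcases hform with h | h
          · exact Or.inl (by rw [ha, h])
          · exact Or.inr (by simp [ha, h])
      · rw [if_neg hc, List.cons_append, List.cons_append] at hs
        injection hs with ha hs2
        cases u2 with
        | nil => exact ⟨[], ⟨c :: W, rfl⟩, Or.inr (by simp [psiW_nil, ha])⟩
        | cons b u3 =>
          rw [List.cons_append] at hs2
          injection hs2 with hb hs3
          by_cases hu3 : u3 = []
          · subst hu3
            exact ⟨[c], ⟨W, rfl⟩, Or.inl (by rw [psiW_singleton, if_neg hc, ha, hb])⟩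
          · obtain ⟨w', hw', hform⟩ := ih u3 hu3 ⟨s, hs3⟩
            refine ⟨c :: w', List.cons_prefix_cons.mpr ⟨rfl, hw'⟩, ?_⟩
            rw [psiW_cons, if_neg hc]
            rcases hform with h | h
            · exact Or.inl (by rw [ha, hb, h]; rfl)
            · exact Or.inr (by simp [ha, hb, h])

theorem psiW_split (z : A) : ∀ (W p u : List A), psiW z W = p ++ z :: u →
    ∃ W1 W2, W = W1 ++ W2 ∧ psiW z W1 = p ∧ psiW z W2 = z :: u := by
  intro W
  induction W with
  | nil =>
    intro p u h
    rw [psiW_nil] at h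
    exact absurd h.symm (by simp)
  | cons c W ih =>
    intro p u h
    rw [psiW_cons] at h
    cases p with
    | nil => exact ⟨[], c :: W, rfl, rfl, by rw [psiW_cons]; simpa using h⟩
    | cons a p' =>
      by_cases hc : c = z
      · rw [if_pos hc, List.singleton_append, List.cons_append] at h
        injection h with ha h2
        obtain ⟨W1, W2, hW, hW1, hW2⟩ := ih p' u h2
        refine ⟨c :: W1, W2, by rw [hW]; rfl, ?_, hW2⟩
        rw [psiW_cons, if_pos hc, hW1, List.singleton_append, ha]
      · rw [if_neg hc, List.cons_append, List.cons_append] at h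
        injection h with ha h2
        simp only [List.append_eq, List.cons_append, List.nil_append] at h2
        cases p' with
        | nil =>
          injection h2 with hb h3
          exact absurd hb hc
        | cons b p'' =>
          injection h2 with hb h3
          obtain ⟨W1, W2, hW, hW1, hW2⟩ := ih p'' u h3
          refine ⟨c :: W1, W2, by rw [hW]; rfl, ?_, hW2⟩
          rw [psiW_cons, if_neg hc, hW1, ha, hb]
          rfl

theorem psiW_prefix_mono (z : A) {u w : List A} (h : u <+: w) :
    psiW z u <+: psiW z w := by
  obtain ⟨s, rfl⟩ := h
  rw [psiW_append]
  exact ⟨psiW z s, rfl⟩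

theorem psiW_follow (z : A) : ∀ (W : List A) (n : ℕ) (h1 : n < (psiW z W).length)
    (h2 : n + 1 < (psiW z W).length),
    (psiW z W)[n] ≠ z → (psiW z W)[n+1] = z := by
  intro W
  induction W with
  | nil => intro n h1 h2 h; simp [psiW_nil] at h1
  | cons c W ih =>
    intro n h1 h2 h
    by_cases hc : c = z
    · simp only [psiW_cons, if_pos hc, List.singleton_append] at h1 h2 h ⊢
      cases n with
      | zero => simp at h
      | succ m =>
        simp only [List.getElem_cons_succ] at h ⊢
        exact ih m (by simpa using h1) (by simpa using h2) h
    · simp only [psiW_cons, if_neg hc, List.cons_append, List.nil_append] at h1 h2 h ⊢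
      cases n with
      | zero => simp at h
      | succ m =>
        simp only [List.getElem_cons_succ] at h ⊢
        cases m with
        | zero =>
          have hW : W ≠ [] := by
            intro e
            subst e
            simp [psiW_nil] at h2
          exact psiW_getElem_zero z hW (by simpa using h2)
        | succ m' =>
          simp only [List.getElem_cons_succ] at h ⊢
          exact ih m' (by simpa using h1) (by simpa using h2) h

theorem psiW_letter_decode (z : A) : ∀ (W : List A) (n : ℕ) (h : n < (psiW z W).length),
    (psiW z W)[n] ≠ z → ∃ m, m < n ∧ ∃ hm : m < W.length, W[m] = (psiW z W)[n] := by
  intro W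
  induction W with
  | nil => intro n h1 h; simp [psiW_nil] at h1
  | cons c W ih =>
    intro n h1 h
    by_cases hc : c = z
    · simp only [psiW_cons, if_pos hc, List.singleton_append] at h1 h ⊢
      cases n with
      | zero => simp at h
      | succ m =>
        simp only [List.getElem_cons_succ] at h ⊢
        obtain ⟨m', hlt, hm', he⟩ := ih m (by simpa using h1) h
        exact ⟨m' + 1, by omega, by simpa using hm', by simpa using he⟩
    · simp only [psiW_cons, if_neg hc, List.cons_append, List.nil_append] at h1 h ⊢
      cases n with
      | zero => simp at h
      | succ m =>
        simp only [List.getElem_cons_succ] at h ⊢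
        cases m with
        | zero => exact ⟨0, by omega, by simp, by simp⟩
        | succ m' =>
          simp only [List.getElem_cons_succ] at h ⊢
          obtain ⟨m'', hlt, hm'', he⟩ := ih m' (by simpa using h1) h
          exact ⟨m'' + 1, by omega, by simpa using hm'', by simpa using he⟩

end PsiW

/-! ### Part 3: the infinite image psiInf -/

/-- The image of an infinite word under `ψ_z`. -/
def psiInf {A : Type*} [DecidableEq A] (z : A) (v : ℕ → A) : ℕ → A :=
  fun n => (psiW z (prefixList v (n+1))).getD n z

section PsiInf
variable {A : Type*} [DecidableEq A] {z : A} {v : ℕ → A}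

theorem length_psiW_prefixList (z : A) (v : ℕ → A) (k : ℕ) :
    k ≤ (psiW z (prefixList v k)).length := by
  have := length_psiW_ge z (prefixList v k)
  rwa [prefixList_length] at this

theorem psiW_prefixList_mono (z : A) (v : ℕ → A) {k l : ℕ} (h : k ≤ l) :
    psiW z (prefixList v k) <+: psiW z (prefixList v l) :=
  psiW_prefix_mono z (prefixList_prefix v h)

theorem psiInf_spec (z : A) (v : ℕ → A) (k : ℕ) :
    IsPrefixInf (psiW z (prefixList v k)) (psiInf z v) := by
  rw [IsPrefixInf]
  apply List.ext_getElem (by rw [prefixList_length])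
  intro n h1 h2
  rw [prefixList_getElem]
  show _ = (psiW z (prefixList v (n+1))).getD n z
  rcases Nat.le_total k (n+1) with h | h
  · have hpre := psiW_prefixList_mono z v h
    rw [List.getD_eq_getElem _ _ (Nat.lt_of_lt_of_le h1 hpre.length_le)]
    exact hpre.getElem h1
  · have hpre := psiW_prefixList_mono z v h
    have hn : n < (psiW z (prefixList v (n+1))).length :=
      Nat.lt_of_lt_of_le (Nat.lt_succ_self n) (length_psiW_prefixList z v (n+1))
    rw [List.getD_eq_getElem _ _ hn]
    exact (hpre.getElem hn).symm

theorem isMorphImage_psiInf (z : A) (v : ℕ → A) : IsMorphImage (psiW z) v (psiInf z v) :=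
  fun k => psiInf_spec z v k

theorem isMorphImage_psiW_unique {y : ℕ → A} (h : IsMorphImage (psiW z) v y) :
    y = psiInf z v := by
  funext n
  have h1 := h (n+1)
  have h2 := psiInf_spec z v (n+1)
  have hn : n < (psiW z (prefixList v (n+1))).length := length_psiW_prefixList z v (n+1)
  have e1 := isPrefixInf_getElem h1 hn
  have e2 := isPrefixInf_getElem h2 hn
  rw [← e1, e2]

theorem psiInf_consInf (z c : A) (v : ℕ → A) :
    psiInf z (consInf c v) = wordAppend (psiW z [c]) (psiInf z v) := by
  symm
  apply isMorphImage_psiW_unique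
  intro k
  cases k with
  | zero => exact rfl
  | succ m =>
    rw [prefixList_consInf, show (c :: prefixList v m) = [c] ++ prefixList v m from rfl,
      psiW_append]
    rw [isPrefixInf_wordAppend_iff]
    exact psiInf_spec z v m

theorem psiInf_zero (z : A) (v : ℕ → A) : psiInf z v 0 = z := by
  have h := psiInf_spec z v 1
  have hl : 0 < (psiW z (prefixList v 1)).length := length_psiW_prefixList z v 1
  have := isPrefixInf_getElem h hl
  rw [← this]
  exact psiW_getElem_zero z (by rw [← List.length_pos_iff_ne_nil, prefixList_length]; omega) hl

theorem psiInf_shift_eq (z : A) (v : ℕ → A) :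
    psiInf z v = wordAppend (psiW z [v 0]) (psiInf z (fun n => v (n+1))) := by
  conv_lhs => rw [← consInf_shift v]
  exact psiInf_consInf z (v 0) _

theorem psiInf_one (z : A) (v : ℕ → A) : psiInf z v 1 = if v 0 = z then z else v 0 := by
  rw [psiInf_shift_eq]
  by_cases h : v 0 = z
  · rw [if_pos h, psiW_singleton, if_pos h]
    have h1 : (1:ℕ) = [z].length + 0 := by simp
    rw [h1, wordAppend_add]
    exact psiInf_zero z _
  · rw [if_neg h, psiW_singleton, if_neg h]
    rw [wordAppend_lt (by simp)]
    rfl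

theorem psiInf_factorAt {w : List A} {m : ℕ} (h : FactorAt v w m) :
    FactorAt (psiInf z v) (psiW z w) ((psiW z (prefixList v m)).length) ∧
      m ≤ (psiW z (prefixList v m)).length := by
  refine ⟨?_, length_psiW_prefixList z v m⟩
  have halign := factorAt_iff_prefixList.1 h
  rw [factorAt_iff_prefixList]
  have h1 := psiInf_spec z v (m + w.length)
  have h2 := psiInf_spec z v m
  rw [halign, psiW_append] at h1
  rw [← List.length_append, ← isPrefixInf_eq_prefixList h1, ← isPrefixInf_eq_prefixList h2]

theorem psiInf_isFactor {w : List A} (h : IsFactorInf v w) :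
    IsFactorInf (psiInf z v) (psiW z w) := by
  obtain ⟨m, hm⟩ := h
  exact ⟨_, (psiInf_factorAt hm).1⟩

theorem psiInf_snoc_z (z : A) (v : ℕ → A) (m : ℕ) :
    IsPrefixInf (psiW z (prefixList v m) ++ [z]) (psiInf z v) := by
  apply isPrefixInf_prefix _ (psiInf_spec z v (m+1))
  rw [prefixList_succ, psiW_append]
  obtain ⟨r, hr⟩ : ∃ r, psiW z [v m] = z :: r := by
    rw [psiW_singleton]; split <;> exact ⟨_, rfl⟩
  exact ⟨r, by rw [List.append_assoc, hr]; rfl⟩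

theorem factorAt_cons {t : ℕ → A} {a : A} {u : List A} {m : ℕ} :
    FactorAt t (a :: u) m ↔ t m = a ∧ FactorAt t u (m+1) := by
  rw [show a :: u = [a] ++ u from rfl, factorAt_append]
  constructor
  · intro ⟨h1, h2⟩
    refine ⟨?_, by simpa using h2⟩
    have := factorAt_getElem (j := 0) h1 (by simp)
    simpa using this.symm
  · intro ⟨h1, h2⟩
    refine ⟨?_, by simpa using h2⟩
    rw [factorAt_iff]
    intro j hj
    simp at hj
    subst hj
    simpa using h1.symm

theorem psiInf_getElem_eq (z : A) (v : ℕ → A) {k n : ℕ}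
    (hn : n < (psiW z (prefixList v k)).length) :
    (psiW z (prefixList v k))[n] = psiInf z v n :=
  isPrefixInf_getElem (psiInf_spec z v k) hn

theorem psiInf_follow {n : ℕ} (h : psiInf z v n ≠ z) : psiInf z v (n+1) = z := by
  have hl1 : n < (psiW z (prefixList v (n+2))).length := by
    have := length_psiW_prefixList z v (n+2); omega
  have hl2 : n + 1 < (psiW z (prefixList v (n+2))).length := by
    have := length_psiW_prefixList z v (n+2); omega
  rw [← psiInf_getElem_eq z v hl2]
  apply psiW_follow z _ n hl1 hl2
  rw [psiInf_getElem_eq z v hl1]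
  exact h

theorem psiInf_letter_decode {n : ℕ} {c : A} (h : psiInf z v n = c) (hc : c ≠ z) :
    ∃ m, m < n ∧ v m = c := by
  have hl : n < (psiW z (prefixList v (n+1))).length := length_psiW_prefixList z v (n+1)
  obtain ⟨m, hlt, hm, he⟩ := psiW_letter_decode z (prefixList v (n+1)) n hl
    (by rw [psiInf_getElem_eq z v hl, h]; exact hc)
  refine ⟨m, hlt, ?_⟩
  rw [prefixList_getElem] at he
  rw [he, psiInf_getElem_eq z v hl, h]

theorem psiInf_letter_up {m : ℕ} {c : A} (h : v m = c) (hc : c ≠ z) :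
    ∃ m', m + 1 ≤ m' ∧ psiInf z v m' = c := by
  have hf : FactorAt v [c] m := by
    rw [factorAt_cons]
    exact ⟨h, factorAt_nil _ _⟩
  obtain ⟨hfa, hle⟩ := psiInf_factorAt (z := z) hf
  rw [psiW_singleton, if_neg hc, factorAt_cons, factorAt_cons] at hfa
  exact ⟨_ + 1, by omega, hfa.2.1⟩

theorem psiInf_no_zz {z' : A} (hzz : z ≠ z') (h : IsFactorInf (psiInf z' v) [z, z]) :
    False := by
  obtain ⟨i, hi⟩ := h
  rw [factorAt_cons, factorAt_cons] at hi
  obtain ⟨h1, h2, -⟩ := hi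
  have := psiInf_follow (v := v) (z := z') (n := i) (by rw [h1]; exact hzz)
  rw [h2] at this
  exact hzz this

theorem prefix_prefixList_isPrefixInf {u : List A} {t : ℕ → A} {n : ℕ}
    (h : u <+: prefixList t n) : IsPrefixInf u t := by
  have hle : u.length ≤ n := by
    have := h.length_le
    rwa [prefixList_length] at this
  have e := List.prefix_iff_eq_take.1 h
  rw [prefixList_take t hle] at e
  exact e

theorem decode_factor {w' : List A} {i : ℕ}
    (h : FactorAt (psiInf z v) (z :: w') (i+1)) :
    ∃ vv m, (z :: w' = psiW z vv ∨ z :: w' = psiW z vv ++ [z]) ∧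
      FactorAt v ((psiInf z v i) :: vv) m := by
  set s := psiInf z v with hs
  set L := (z :: w').length with hL
  set n := i + 1 + L with hn
  have hlen : n ≤ (psiW z (prefixList v n)).length := length_psiW_prefixList z v n
  have hPeq : psiW z (prefixList v n) =
      prefixList s ((psiW z (prefixList v n)).length) := psiInf_spec z v n
  have halign : prefixList s (i + 1 + L) = prefixList s (i+1) ++ (z :: w') :=
    factorAt_iff_prefixList.1 h
  set R := (List.range ((psiW z (prefixList v n)).length - n)).map
    (fun j => s (n + j)) with hR
  have hsplit0 : psiW z (prefixList v n) = prefixList s (i+1) ++ (z :: (w' ++ R)) := by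
    rw [hPeq, show (psiW z (prefixList v n)).length = n + ((psiW z (prefixList v n)).length - n)
      by omega, prefixList_add, hn, halign]
    simp
    rfl
  obtain ⟨W1, W2, hW12, hW1, hW2⟩ := psiW_split z (prefixList v n) _ _ hsplit0
  have hW1ne : W1 ≠ [] := by
    intro e
    rw [e, psiW_nil] at hW1
    have : (prefixList s (i+1)).length = 0 := by rw [← hW1]; rfl
    rw [prefixList_length] at this
    omega
  set k := W1.length with hk
  have hk1 : 1 ≤ k := List.length_pos_iff.2 hW1ne
  have hkn : k + W2.length = n := by
    have := congrArg List.length hW12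
    rw [prefixList_length, List.length_append] at this
    omega
  have hW1eq : W1 = prefixList v k := by
    apply prefix_prefixList_isPrefixInf (n := n)
    exact ⟨W2, hW12.symm⟩
  have hlast1 : (psiW z W1).getLast? = some (s i) := by
    rw [hW1, prefixList_succ]
    simp
  have hlast2 : W1.getLast? = some (v (k-1)) := by
    rw [hW1eq, show prefixList v k = prefixList v (k-1) ++ [v (k-1)] from by
      rw [← prefixList_succ]; congr 1; omega]
    simp
  have hprec : v (k - 1) = s i := by
    have hgl := psiW_getLast z hW1ne
    rw [hlast1, hlast2] at hgl
    injection hgl with e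
    exact e.symm
  have hpre : (z :: w') <+: psiW z W2 := by
    rw [hW2]
    exact ⟨R, by simp⟩
  obtain ⟨vv, hvv, hform⟩ := psiW_prefix_decode z W2 (z :: w') (by simp) hpre
  have hW2fac : FactorAt v W2 k := by
    rw [factorAt_iff_prefixList, show k + W2.length = n from hkn, hW12, hW1eq]
  have hvvfac : FactorAt v vv k := factorAt_prefix hvv hW2fac
  refine ⟨vv, k - 1, hform, ?_⟩
  rw [factorAt_cons]
  exact ⟨hprec, by rwa [show k - 1 + 1 = k by omega]⟩

theorem decode_prefix {w : List A} (hw : w ≠ []) (h : IsPrefixInf w (psiInf z v)) :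
    ∃ vv, (w = psiW z vv ∨ w = psiW z vv ++ [z]) ∧ IsPrefixInf vv v := by
  set n := w.length with hn
  have hsp := psiInf_spec z v n
  have hple : w.length ≤ (psiW z (prefixList v n)).length := length_psiW_prefixList z v n
  have hpre : w <+: psiW z (prefixList v n) := isPrefixInf_prefix_of_le h hsp hple
  obtain ⟨vv, hvv, hform⟩ := psiW_prefix_decode z _ w hw hpre
  exact ⟨vv, hform, prefix_prefixList_isPrefixInf hvv⟩

end PsiInf


/-! ### Part 4: recurrence from recurring prefixes -/

section Recur
variable {A : Type*}

theorem recurrent_of_prefixes {t : ℕ → A}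
    (h : ∀ p, ∃ m, 1 ≤ m ∧ FactorAt t (prefixList t p) m) : Recurrent t := by
  have hocc : ∀ p N, ∃ m, N ≤ m ∧ FactorAt t (prefixList t p) m := by
    intro p N
    induction N with
    | zero => exact ⟨0, le_refl 0, factorAt_prefixList t p⟩
    | succ N ih =>
      obtain ⟨m, hm, hf⟩ := ih
      obtain ⟨m', hm', hf'⟩ := h (m + p)
      have hsplit : prefixList t (m + p) = prefixList t m ++ prefixList t p := by
        rw [prefixList_add]
        congr 1
        have := hf.symm
        rwa [prefixList_length] at this
      rw [hsplit] at hf'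
      have key := (factorAt_append.1 hf').2
      rw [prefixList_length] at key
      exact ⟨m' + m, by omega, key⟩
  intro u hu N
  obtain ⟨i, hi⟩ := hu
  obtain ⟨m, hm, hf⟩ := hocc (i + u.length) N
  have hsplit : prefixList t (i + u.length) = prefixList t i ++ u :=
    factorAt_iff_prefixList.1 hi
  rw [hsplit] at hf
  have key := (factorAt_append.1 hf).2
  rw [prefixList_length] at key
  exact ⟨m + i, by omega, key⟩

theorem defect_of_not_recurrent {t : ℕ → A} (h : ¬ Recurrent t) :
    ∃ p, ∀ m, FactorAt t (prefixList t p) m → m = 0 := by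
  by_contra hc
  push_neg at hc
  apply h
  apply recurrent_of_prefixes
  intro p
  obtain ⟨m, hm, hne⟩ := hc p
  exact ⟨m, by omega, hm⟩

end Recur

/-! ### Part 5: chains of desubstitutions -/

section Chain
variable {A : Type*} [DecidableEq A] {V : ℕ → ℕ → A} {ξ : ℕ → A}

theorem psiW_length_eq {z : A} : ∀ {w : List A},
    (psiW z w).length = w.length → w = List.replicate w.length z := by
  intro w
  induction w with
  | nil => intro _; rfl
  | cons c w ih =>
    intro h
    rw [psiW_cons] at h
    by_cases hc : c = z
    · rw [if_pos hc] at h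
      simp only [List.singleton_append, List.length_cons] at h
      have := ih (by omega)
      rw [List.length_cons, List.replicate_succ, hc, ← this]
    · exfalso
      rw [if_neg hc] at h
      have := length_psiW_ge z w
      simp at h
      omega

theorem chain_decode (hV : ∀ i, V i = psiInf (ξ i) (V (i+1))) {i : ℕ} {u' : List A} {j : ℕ}
    (h : FactorAt (V i) (ξ i :: u') (j+1)) :
    ∃ w m, (ξ i :: u' = psiW (ξ i) w ∨ ξ i :: u' = psiW (ξ i) w ++ [ξ i]) ∧
      FactorAt (V (i+1)) ((V i j) :: w) m := by
  have h' : FactorAt (psiInf (ξ i) (V (i+1))) (ξ i :: u') (j+1) := by rw [← hV i]; exact h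
  obtain ⟨w, m, hf, hfa⟩ := decode_factor h'
  refine ⟨w, m, hf, ?_⟩
  rw [hV i]
  exact hfa

theorem chain_decode_prefix (hV : ∀ i, V i = psiInf (ξ i) (V (i+1))) {i : ℕ} {u : List A}
    (hu : u ≠ []) (h : IsPrefixInf u (V i)) :
    ∃ w, (u = psiW (ξ i) w ∨ u = psiW (ξ i) w ++ [ξ i]) ∧ IsPrefixInf w (V (i+1)) := by
  have h' : IsPrefixInf u (psiInf (ξ i) (V (i+1))) := by rw [← hV i]; exact h
  exact decode_prefix hu h'

theorem chain_prefix_lift (hV : ∀ i, V i = psiInf (ξ i) (V (i+1))) {i : ℕ} {u : List A}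
    (h : IsPrefixInf u (V (i+1))) :
    IsPrefixInf (psiW (ξ i) u) (V i) ∧ IsPrefixInf (psiW (ξ i) u ++ [ξ i]) (V i) := by
  rw [hV i]
  have he : u = prefixList (V (i+1)) u.length := h
  constructor
  · conv_lhs => rw [he]
    exact psiInf_spec (ξ i) (V (i+1)) u.length
  · conv_lhs => rw [he]
    exact psiInf_snoc_z (ξ i) (V (i+1)) u.length

theorem chain_factor_up (hV : ∀ i, V i = psiInf (ξ i) (V (i+1))) {i : ℕ} {u : List A}
    (h : IsFactorInf (V (i+1)) u) : IsFactorInf (V i) (psiW (ξ i) u) := by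
  rw [hV i]
  exact psiInf_isFactor h

theorem chain_replicate_lift (hV : ∀ i, V i = psiInf (ξ i) (V (i+1))) {i q : ℕ} {z : A}
    (hz : ξ i = z) (h : IsPrefixInf (List.replicate q z) (V (i+1))) :
    IsPrefixInf (List.replicate (q+1) z) (V i) := by
  have := (chain_prefix_lift hV h).2
  rw [hz, psiW_replicate, ← List.replicate_succ'] at this
  exact this

theorem chain_pal (hV : ∀ i, V i = psiInf (ξ i) (V (i+1))) :
    ∀ n i, ∃ Q : List A, Q.reverse = Q ∧ IsPrefixInf Q (V i) ∧ n ≤ Q.length := by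
  intro n
  induction n with
  | zero => exact fun i => ⟨[], rfl, rfl, by simp⟩
  | succ n ih =>
    intro i
    obtain ⟨Q, hpal, hpre, hlen⟩ := ih (i+1)
    refine ⟨psiW (ξ i) Q ++ [ξ i], psiW_palindrome hpal, (chain_prefix_lift hV hpre).2, ?_⟩
    have := length_psiW_ge (ξ i) Q
    simp only [List.length_append, List.length_cons]
    omega

theorem chain_recurrent (hV : ∀ i, V i = psiInf (ξ i) (V (i+1))) (i : ℕ) :
    Recurrent (V i) := by
  apply recurrent_of_prefixes
  intro p
  obtain ⟨Q', hpal', hpre', hlen'⟩ := chain_pal hV p i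
  obtain ⟨Q, hpal, hpre, hlen⟩ := chain_pal hV (Q'.length + 1) i
  have hQQ : Q' <+: Q := isPrefixInf_prefix_of_le hpre' hpre (by omega)
  have hsuf : Q' <:+ Q := by
    rw [← hpal', ← hpal]
    exact List.reverse_suffix.2 hQQ
  obtain ⟨r, hr⟩ := hsuf
  have hrlen : 1 ≤ r.length := by
    have := congrArg List.length hr
    simp at this
    omega
  have hQ0 : FactorAt (V i) Q 0 := isPrefixInf_iff_factorAt.1 hpre
  have hQ'occ : FactorAt (V i) Q' (0 + r.length) := by
    rw [← hr] at hQ0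
    exact (factorAt_append.1 hQ0).2
  have hPpre : prefixList (V i) p <+: Q' :=
    isPrefixInf_prefix_of_le (isPrefixInf_prefixList (V i) p) hpre' (by rw [prefixList_length]; omega)
  exact ⟨r.length, by omega, by simpa using factorAt_prefix hPpre hQ'occ⟩

theorem chain_reverse_closed (hV : ∀ i, V i = psiInf (ξ i) (V (i+1))) (i : ℕ) :
    ∀ u, IsFactorInf (V i) u → IsFactorInf (V i) u.reverse := by
  intro u ⟨m, hm⟩
  obtain ⟨Q, hpal, hpre, hlen⟩ := chain_pal hV (m + u.length) i
  have h1 : u <:+: prefixList (V i) (m + u.length) := factorAt_infix_prefixList hm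
  have h2 : prefixList (V i) (m + u.length) <+: Q :=
    isPrefixInf_prefix_of_le (isPrefixInf_prefixList _ _) hpre (by rw [prefixList_length]; omega)
  have h3 : u <:+: Q := h1.trans h2.isInfix
  have h4 : u.reverse <:+: Q := by
    rw [← hpal]
    exact (List.reverse_infix).2 h3
  apply isFactorInf_of_infix_prefixList (k := Q.length)
  rw [← isPrefixInf_eq_prefixList hpre]
  exact h4

theorem rep_prefix_of_form {A : Type*} [DecidableEq A] {z : A} {q : ℕ} {w : List A}
    (h : List.replicate (q+1) z = psiW z w ∨ List.replicate (q+1) z = psiW z w ++ [z]) :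
    List.replicate q z <+: w := by
  rcases h with h | h
  · rw [psiW_eq_replicate (k := q+1) h.symm]
    exact ⟨[z], List.replicate_succ'.symm⟩
  · have heq : psiW z w = List.replicate q z :=
      List.append_cancel_right (by rw [← h, List.replicate_succ'])
    rw [psiW_eq_replicate heq]

theorem chain_run (hV : ∀ i, V i = psiInf (ξ i) (V (i+1))) :
    ∀ q i z a, a ≠ z → IsFactorInf (V i) (a :: List.replicate q z) →
    IsFactorInf (V i) (List.replicate (q+1) z) →
    IsPrefixInf (List.replicate q z) (V i) := by
  intro q
  induction q with
  | zero => intro i z a _ _ _; rfl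
  | succ q ih =>
    intro i z a haz h1 h2
    by_cases hz : ξ i = z
    · -- decode a-side
      obtain ⟨ja, hja⟩ := h1
      rw [factorAt_cons] at hja
      obtain ⟨hVa, hja2⟩ := hja
      have hja2' : FactorAt (V i) (ξ i :: List.replicate q z) (ja + 1) := by
        rw [hz, ← List.replicate_succ]
        exact hja2
      obtain ⟨wa, ma, hforma, hfa⟩ := chain_decode hV hja2'
      rw [hz] at hforma
      rw [hVa] at hfa
      rw [← List.replicate_succ] at hforma
      have hwa : List.replicate q z <+: wa := rep_prefix_of_form hforma
      have hfacA : IsFactorInf (V (i+1)) (a :: List.replicate q z) :=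
        ⟨ma, factorAt_prefix (List.cons_prefix_cons.2 ⟨rfl, hwa⟩) hfa⟩
      -- decode run-side
      have hfacR : IsFactorInf (V (i+1)) (List.replicate (q+1) z) := by
        obtain ⟨j2, hj2⟩ := h2
        cases j2 with
        | zero =>
          have hpre : IsPrefixInf (List.replicate (q+2) z) (V i) := by
            rw [isPrefixInf_iff_factorAt]
            exact hj2
          obtain ⟨w, hform, hwp⟩ := chain_decode_prefix hV (by simp) hpre
          rw [hz] at hform
          have hrep : List.replicate (q+1) z <+: w := rep_prefix_of_form hform
          exact isFactorInf_infix hrep.isInfix (isFactorInf_of_isPrefixInf hwp)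
        | succ j' =>
          have hj2' : FactorAt (V i) (ξ i :: List.replicate (q+1) z) (j' + 1) := by
            rw [hz, ← List.replicate_succ]
            exact hj2
          obtain ⟨w, m, hform, hfw⟩ := chain_decode hV hj2'
          rw [hz] at hform
          rw [← List.replicate_succ] at hform
          have hrep : List.replicate (q+1) z <+: w := rep_prefix_of_form hform
          have hocc : IsFactorInf (V (i+1)) ((V i j') :: w) := ⟨m, hfw⟩
          apply isFactorInf_infix _ hocc
          exact (hrep.isInfix).trans (List.infix_cons (List.infix_refl w))
      have := ih (i+1) z a haz hfacA hfacR
      exact chain_replicate_lift hV hz this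
    · exfalso
      apply psiInf_no_zz (z := z) (z' := ξ i) (v := V (i+1)) (fun e => hz e.symm)
      rw [← hV i]
      apply isFactorInf_infix _ h2
      refine ⟨[], List.replicate q z, ?_⟩
      rw [List.nil_append, show q + 1 + 1 = 2 + q by omega, List.replicate_add]
      rfl

theorem chain_leftSpecial (hV : ∀ i, V i = psiInf (ξ i) (V (i+1))) :
    ∀ p i u, u.length ≤ p → LeftSpecial (V i) u → IsPrefixInf u (V i) := by
  intro p
  induction p with
  | zero =>
    intro i u hu _
    have : u = [] := List.eq_nil_of_length_eq_zero (by omega)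
    subst this
    rfl
  | succ p ih =>
    intro i u hlen hLS
    rcases Nat.lt_or_ge u.length (p+1) with hlt | hge
    · exact ih i u (by omega) hLS
    have hul : u.length = p + 1 := by omega
    obtain ⟨a, b, hab, hfa, hfb⟩ := hLS
    clear hlen hge
    suffices aux : ∀ a b, a ≠ b → IsFactorInf (V i) (a :: u) → IsFactorInf (V i) (b :: u) →
        a ≠ ξ i → IsPrefixInf u (V i) by
      by_cases haz : a = ξ i
      · have hbz : b ≠ ξ i := fun e => hab (by rw [haz, e])
        exact aux b a (Ne.symm hab) hfb hfa hbz
      · exact aux a b hab hfa hfb haz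
    clear hfa hfb hab a b
    intro a b hab hfa hfb haz
    obtain ⟨ja, hja⟩ := hfa
    obtain ⟨jb, hjb⟩ := hfb
    have hune : u ≠ [] := by intro e; rw [e] at hul; simp at hul
    obtain ⟨u0, u', rfl⟩ := List.exists_cons_of_ne_nil hune
    rw [factorAt_cons] at hja hjb
    obtain ⟨hVa, hja2⟩ := hja
    obtain ⟨hVb, hjb2⟩ := hjb
    have hu0 : u0 = ξ i := by
      have h3 : V i (ja + 1) = u0 := (factorAt_cons.1 hja2).1
      have hfol : psiInf (ξ i) (V (i+1)) (ja+1) = ξ i :=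
        psiInf_follow (n := ja) (by rw [← hV i, hVa]; exact haz)
      rw [hV i] at h3
      rw [← h3]
      exact hfol
    subst hu0
    rw [List.length_cons] at hul
    have hul' : u'.length = p := by omega
    by_cases hrep : u' = List.replicate p (ξ i)
    · -- run case: u = ξ i :: replicate p (ξ i) = replicate (p+1) (ξ i)
      subst hrep
      by_cases hbz : b = ξ i
      · -- b = ξ i : b :: u = replicate (p+2)
        have hrun := chain_run hV (p+1) i (ξ i) a haz
          ⟨ja, by rw [factorAt_cons, List.replicate_succ]; exact ⟨hVa, hja2⟩⟩
          ⟨jb, by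
            rw [List.replicate_succ, List.replicate_succ, factorAt_cons]
            rw [← List.replicate_succ]
            exact ⟨by rw [hVb, hbz], hjb2⟩⟩
        rw [List.replicate_succ] at hrun
        exact hrun
      · -- both a,b ≠ ξ i : decode and shorten to replicate p
        obtain ⟨wa, ma, hforma, hfwa⟩ := chain_decode hV hja2
        obtain ⟨wb, mb, hformb, hfwb⟩ := chain_decode hV hjb2
        rw [hVa] at hfwa
        rw [hVb] at hfwb
        rw [← List.replicate_succ] at hforma hformb
        have hwa := rep_prefix_of_form hforma
        have hwb := rep_prefix_of_form hformb
        have hlsw : LeftSpecial (V (i+1)) (List.replicate p (ξ i)) :=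
          ⟨a, b, hab,
            ⟨ma, factorAt_prefix (List.cons_prefix_cons.2 ⟨rfl, hwa⟩) hfwa⟩,
            ⟨mb, factorAt_prefix (List.cons_prefix_cons.2 ⟨rfl, hwb⟩) hfwb⟩⟩
        have := ih (i+1) _ (by simp) hlsw
        have hfin := chain_replicate_lift hV rfl this
        rw [List.replicate_succ] at hfin
        exact hfin
    · -- general case
      obtain ⟨wa, ma, hforma, hfwa⟩ := chain_decode hV hja2
      obtain ⟨wb, mb, hformb, hfwb⟩ := chain_decode hV hjb2
      rw [hVa] at hfwa
      rw [hVb] at hfwb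
      obtain ⟨w, hform, hpwa, hpwb⟩ : ∃ w,
          (ξ i :: u' = psiW (ξ i) w ∨ ξ i :: u' = psiW (ξ i) w ++ [ξ i]) ∧
          w <+: wa ∧ w <+: wb := by
        rcases hforma with h1 | h1 <;> rcases hformb with h2 | h2
        · have he : wa = wb := psiW_injective (ξ i) (by rw [← h1, ← h2])
          exact ⟨wa, Or.inl h1, List.prefix_refl wa, he ▸ List.prefix_refl wa⟩
        · have he : wa = wb ++ [ξ i] := by
            apply psiW_injective (ξ i)
            rw [← h1, h2, psiW_append, psiW_singleton, if_pos rfl]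
          exact ⟨wb, Or.inr h2, by rw [he]; exact ⟨[ξ i], rfl⟩, List.prefix_refl wb⟩
        · have he : wb = wa ++ [ξ i] := by
            apply psiW_injective (ξ i)
            rw [← h2, h1, psiW_append, psiW_singleton, if_pos rfl]
          exact ⟨wa, Or.inr h1, List.prefix_refl wa, by rw [he]; exact ⟨[ξ i], rfl⟩⟩
        · have he : wa = wb := psiW_injective (ξ i)
            (List.append_cancel_right (by rw [← h1, ← h2]))
          exact ⟨wa, Or.inr h1, List.prefix_refl wa, he ▸ List.prefix_refl wa⟩
      have hwlen : w.length ≤ p := by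
        rcases hform with hf | hf
        · have hlw := congrArg List.length hf
          simp only [List.length_cons] at hlw
          have hge := length_psiW_ge (ξ i) w
          rcases Nat.lt_or_ge w.length (p+1) with h | h
          · omega
          · exfalso
            have heq : (psiW (ξ i) w).length = w.length := by omega
            have hwrep := psiW_length_eq heq
            apply hrep
            rw [hwrep, show w.length = p + 1 by omega, psiW_replicate,
              List.replicate_succ] at hf
            simpa using hf
        · have hlw := congrArg List.length hf
          simp only [List.length_cons, List.length_append, List.length_singleton] at hlw
          have hge := length_psiW_ge (ξ i) w
          omega
      have hlsw : LeftSpecial (V (i+1)) w :=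
        ⟨a, b, hab,
          ⟨ma, factorAt_prefix (List.cons_prefix_cons.2 ⟨rfl, hpwa⟩) hfwa⟩,
          ⟨mb, factorAt_prefix (List.cons_prefix_cons.2 ⟨rfl, hpwb⟩) hfwb⟩⟩
      have hwp := ih (i+1) w hwlen hlsw
      rcases hform with hf | hf
      · rw [hf]
        exact (chain_prefix_lift hV hwp).1
      · rw [hf]
        exact (chain_prefix_lift hV hwp).2

theorem chain_letter_down (hV : ∀ i, V i = psiInf (ξ i) (V (i+1))) (f : A) :
    ∀ d i, ξ (i + d) = f → IsFactorInf (V i) [f] := by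
  intro d
  induction d with
  | zero =>
    intro i h
    rw [Nat.add_zero] at h
    refine ⟨0, ?_⟩
    rw [factorAt_cons]
    refine ⟨?_, factorAt_nil _ _⟩
    rw [hV i, psiInf_zero]
    exact h
  | succ d ih =>
    intro i h
    have hi1 : IsFactorInf (V (i+1)) [f] := ih (i+1) (by rw [← h]; congr 1; omega)
    have hup := chain_factor_up hV hi1
    apply isFactorInf_infix _ hup
    rw [psiW_singleton]
    by_cases he : f = ξ i
    · rw [if_pos he, he]
    · rw [if_neg he]
      exact ⟨[ξ i], [], rfl⟩

theorem chain_QF (hV : ∀ i, V i = psiInf (ξ i) (V (i+1))) (f : A)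
    (hf : ∀ j, ∃ k, j ≤ k ∧ ξ k = f) :
    ∀ n i, ∃ Q : List A, Q.reverse = Q ∧ IsPrefixInf Q (V i) ∧ n ≤ Q.length ∧
      IsFactorInf (V i) (Q ++ [f]) := by
  intro n
  induction n with
  | zero =>
    intro i
    obtain ⟨k, hk, hkf⟩ := hf i
    refine ⟨[], rfl, rfl, by simp, ?_⟩
    simpa using chain_letter_down hV f (k - i) i (by rw [show i + (k-i) = k by omega]; exact hkf)
  | succ n ih =>
    intro i
    obtain ⟨Q, hpal, hpre, hlen, hfac⟩ := ih (i+1)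
    refine ⟨psiW (ξ i) Q ++ [ξ i], psiW_palindrome hpal, (chain_prefix_lift hV hpre).2,
      by
        have := length_psiW_ge (ξ i) Q
        simp only [List.length_append, List.length_cons, List.length_nil]
        omega, ?_⟩
    obtain ⟨m, hm⟩ := hfac
    have halign : prefixList (V (i+1)) (m + (Q ++ [f]).length)
        = prefixList (V (i+1)) m ++ (Q ++ [f]) := factorAt_iff_prefixList.1 hm
    have hbig : IsPrefixInf
        (psiW (ξ i) (prefixList (V (i+1)) (m + (Q ++ [f]).length)) ++ [ξ i]) (V i) := by
      rw [hV i]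
      exact psiInf_snoc_z (ξ i) (V (i+1)) _
    rw [halign, psiW_append, psiW_append] at hbig
    apply isFactorInf_of_infix_prefixList
      (k := (psiW (ξ i) (prefixList (V (i+1)) m) ++ (psiW (ξ i) Q ++ psiW (ξ i) [f]) ++ [ξ i]).length)
    rw [← isPrefixInf_eq_prefixList hbig]
    by_cases hfz : f = ξ i
    · refine ⟨psiW (ξ i) (prefixList (V (i+1)) m), [], ?_⟩
      rw [psiW_singleton, if_pos hfz, hfz]
      simp
    · refine ⟨psiW (ξ i) (prefixList (V (i+1)) m), [ξ i], ?_⟩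
      rw [psiW_singleton, if_neg hfz]
      simp

theorem chain_std (hV : ∀ i, V i = psiInf (ξ i) (V (i+1))) : StdEpisturmian (V 0) := by
  refine ⟨⟨chain_reverse_closed hV 0, ?_⟩, ?_⟩
  · intro u u' hu hu' hlen
    obtain ⟨a, b, hab, h1, h2⟩ := hu
    obtain ⟨a', b', hab', h1', h2'⟩ := hu'
    have hrev : ∀ (w : List A) (c : A), IsFactorInf (V 0) (w ++ [c]) →
        IsFactorInf (V 0) (c :: w.reverse) := by
      intro w c hw
      have := chain_reverse_closed hV 0 _ hw
      simpa using this
    have hls : LeftSpecial (V 0) u.reverse := ⟨a, b, hab, hrev u a h1, hrev u b h2⟩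
    have hls' : LeftSpecial (V 0) u'.reverse := ⟨a', b', hab', hrev u' a' h1', hrev u' b' h2'⟩
    have e1 := chain_leftSpecial hV u.reverse.length 0 u.reverse (le_refl _) hls
    have e2 := chain_leftSpecial hV u'.reverse.length 0 u'.reverse (le_refl _) hls'
    have he : u.reverse = u'.reverse := by
      rw [isPrefixInf_eq_prefixList e1, isPrefixInf_eq_prefixList e2]
      rw [List.length_reverse, List.length_reverse, hlen]
    simpa using congrArg List.reverse he
  · intro u hls
    exact chain_leftSpecial hV u.length 0 u (le_refl _) hls

end Chain


/-! ### Part 6: iterated pure epistandard morphisms -/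

section Mu
variable {A : Type*} [DecidableEq A]

/-- Finite-word iterated morphism `ψ_{z 0} ∘ ψ_{z 1} ∘ ⋯ ∘ ψ_{z (i-1)}`. -/
def MuW (z : ℕ → A) : ℕ → List A → List A
  | 0 => id
  | (i+1) => fun w => MuW z i (psiW (z i) w)

/-- Infinite-word iterated morphism. -/
def MuInf (z : ℕ → A) : ℕ → (ℕ → A) → (ℕ → A)
  | 0 => id
  | (i+1) => fun v => MuInf z i (psiInf (z i) v)

theorem MuW_append (z : ℕ → A) (i : ℕ) (u v : List A) :
    MuW z i (u ++ v) = MuW z i u ++ MuW z i v := by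
  induction i generalizing u v with
  | zero => rfl
  | succ i ih =>
    show MuW z i (psiW (z i) (u ++ v)) = _
    rw [psiW_append, ih]
    rfl

theorem MuW_prefix_mono (z : ℕ → A) (i : ℕ) {u w : List A} (h : u <+: w) :
    MuW z i u <+: MuW z i w := by
  obtain ⟨s, rfl⟩ := h
  rw [MuW_append]
  exact ⟨MuW z i s, rfl⟩

theorem length_MuW_ge (z : ℕ → A) (i : ℕ) (w : List A) :
    w.length ≤ (MuW z i w).length := by
  induction i generalizing w with
  | zero => exact le_refl _
  | succ i ih =>
    calc w.length ≤ (psiW (z i) w).length := length_psiW_ge _ _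
      _ ≤ (MuW z i (psiW (z i) w)).length := ih _

theorem pureEpistandard_comp_psiW {f : List A → List A} (a : A) (h : PureEpistandard f) :
    PureEpistandard (fun w => f (psiW a w)) := by
  induction h with
  | id => exact PureEpistandard.comp a _root_.id PureEpistandard.id
  | comp b g hg ih => exact PureEpistandard.comp b _ ih

theorem MuW_pure (z : ℕ → A) (i : ℕ) : PureEpistandard (MuW z i) := by
  induction i with
  | zero => exact PureEpistandard.id
  | succ i ih => exact pureEpistandard_comp_psiW (z i) ih

theorem isMorphImage_MuInf (z : ℕ → A) (i : ℕ) (v : ℕ → A) :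
    IsMorphImage (MuW z i) v (MuInf z i v) := by
  induction i generalizing v with
  | zero => exact fun k => isPrefixInf_prefixList v k
  | succ i ih =>
    intro k
    show IsPrefixInf (MuW z i (psiW (z i) (prefixList v k))) (MuInf z i (psiInf (z i) v))
    rw [isPrefixInf_eq_prefixList (psiInf_spec (z i) v k)]
    exact ih (psiInf (z i) v) _

theorem psiInf_wordAppend (z0 : A) (d : List A) (v : ℕ → A) :
    psiInf z0 (wordAppend d v) = wordAppend (psiW z0 d) (psiInf z0 v) := by
  induction d generalizing v with
  | nil => rw [wordAppend_nil, psiW_nil, wordAppend_nil]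
  | cons c d ih =>
    have h1 : wordAppend (c :: d) v = consInf c (wordAppend d v) := by
      rw [consInf_eq_wordAppend, ← wordAppend_append]
      rfl
    rw [h1, psiInf_consInf, ih, ← wordAppend_append, ← psiW_append]
    rfl

theorem MuInf_wordAppend (z : ℕ → A) (i : ℕ) (d : List A) (v : ℕ → A) :
    MuInf z i (wordAppend d v) = wordAppend (MuW z i d) (MuInf z i v) := by
  induction i generalizing d v with
  | zero => rfl
  | succ i ih =>
    show MuInf z i (psiInf (z i) (wordAppend d v)) = _
    rw [psiInf_wordAppend, ih]
    rfl

theorem MuInf_consInf (z : ℕ → A) (i : ℕ) (c : A) (v : ℕ → A) :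
    MuInf z i (consInf c v) = wordAppend (MuW z i [c]) (MuInf z i v) := by
  rw [consInf_eq_wordAppend, MuInf_wordAppend]

theorem MuInf_factorAt (z : ℕ → A) (i : ℕ) {v : ℕ → A} {w : List A} {m : ℕ}
    (h : FactorAt v w m) :
    ∃ m', m ≤ m' ∧ FactorAt (MuInf z i v) (MuW z i w) m' := by
  induction i generalizing v w m with
  | zero => exact ⟨m, le_refl m, h⟩
  | succ i ih =>
    obtain ⟨hfa, hle⟩ := psiInf_factorAt (z := z i) h
    obtain ⟨m', hm', hfa'⟩ := ih hfa
    exact ⟨m', by omega, hfa'⟩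

theorem prefixList_one (v : ℕ → A) : prefixList v 1 = [v 0] := by
  simp [prefixList, show List.range 1 = [0] from rfl]

end Mu


/-! ### Part 7: the dropped-prefix bookkeeping -/

section DD
variable {A : Type*} [DecidableEq A]

/-- The finite word dropped from `μ_i(t^{(i)})` to recover `t`. -/
def ddW (ts : ℕ → ℕ → A) (z : ℕ → A) : ℕ → List A
  | 0 => []
  | (j+1) => if ts j 0 = z j then ddW ts z j else MuW z j [z j] ++ ddW ts z j

theorem first_letter_step (ts : ℕ → ℕ → A) (z : ℕ → A)
    (hstep : ∀ i, (if ts i 0 = z i then ts i else consInf (z i) (ts i))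
      = psiInf (z i) (ts (i+1)))
    (i : ℕ) (h : ts i 0 ≠ z i) : ts i 0 = ts (i+1) 0 ∧ ts (i+1) 0 ≠ z i := by
  have hk := hstep i
  rw [if_neg h] at hk
  have h1 := congrFun hk 1
  rw [consInf_succ, psiInf_one] at h1
  by_cases he : ts (i+1) 0 = z i
  · rw [if_pos he] at h1
    exact absurd h1 h
  · rw [if_neg he] at h1
    exact ⟨h1, he⟩

theorem dd_invariant (ts : ℕ → ℕ → A) (z : ℕ → A)
    (hstep : ∀ i, (if ts i 0 = z i then ts i else consInf (z i) (ts i))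
      = psiInf (z i) (ts (i+1))) :
    ∀ i, wordAppend (ddW ts z i) (ts 0) = MuInf z i (ts i) ∧
      ddW ts z i <+: MuW z i [ts i 0] ∧ (ddW ts z i).length < (MuW z i [ts i 0]).length := by
  intro i
  induction i with
  | zero =>
    refine ⟨?_, ?_, ?_⟩
    · rw [show ddW ts z 0 = [] from rfl, wordAppend_nil]
      rfl
    · exact List.nil_prefix
    · show ([] : List A).length < ([ts 0 0] : List A).length
      simp
  | succ i ih =>
    obtain ⟨e1, e2, e3⟩ := ih
    have hk := hstep i
    by_cases hkp : ts i 0 = z i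
    · rw [if_pos hkp] at hk
      have hddeq : ddW ts z (i+1) = ddW ts z i := by simp [ddW, hkp]
      have hMu : MuInf z (i+1) (ts (i+1)) = MuInf z i (ts i) := by
        show MuInf z i (psiInf (z i) (ts (i+1))) = _
        rw [← hk]
      have hpre : MuW z i [z i] <+: MuW z (i+1) [ts (i+1) 0] := by
        show MuW z i [z i] <+: MuW z i (psiW (z i) [ts (i+1) 0])
        apply MuW_prefix_mono
        rw [psiW_singleton]
        split
        · exact List.prefix_refl _
        · exact ⟨[ts (i+1) 0], rfl⟩
      rw [hddeq, hMu]
      rw [hkp] at e2 e3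
      exact ⟨e1, e2.trans hpre, Nat.lt_of_lt_of_le e3 hpre.length_le⟩
    · rw [if_neg hkp] at hk
      have hfl1 := first_letter_step ts z hstep i hkp
      have hddeq : ddW ts z (i+1) = MuW z i [z i] ++ ddW ts z i := by simp [ddW, hkp]
      have hMu : MuInf z (i+1) (ts (i+1)) = wordAppend (MuW z i [z i]) (MuInf z i (ts i)) := by
        show MuInf z i (psiInf (z i) (ts (i+1))) = _
        rw [← hk, MuInf_consInf]
      have hsplit : MuW z (i+1) [ts (i+1) 0] = MuW z i [z i] ++ MuW z i [ts (i+1) 0] := by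
        show MuW z i (psiW (z i) [ts (i+1) 0]) = _
        rw [psiW_singleton, if_neg hfl1.2,
          show ([z i, ts (i+1) 0] : List A) = [z i] ++ [ts (i+1) 0] from rfl, MuW_append]
      refine ⟨?_, ?_, ?_⟩
      · rw [hddeq, hMu, ← e1, wordAppend_append]
      · rw [hddeq, hsplit, ← hfl1.1]
        obtain ⟨r, hr⟩ := e2
        exact ⟨r, by rw [List.append_assoc, hr]⟩
      · rw [hddeq, hsplit, ← hfl1.1, List.length_append, List.length_append]
        omega

end DD

/-- If `t` with `Alph(t) = A` admits an infinite sequence of non-recurrent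
infinite words `t⁽ⁱ⁾` and letters `x₁, x₂, …` with `t⁽⁰⁾ = t` and
`t'⁽ⁱ⁻¹⁾ = ψ_{xᵢ}(t⁽ⁱ⁾)` (where `t'⁽ⁱ⁻¹⁾ = t⁽ⁱ⁻¹⁾` if `t⁽ⁱ⁻¹⁾` begins with `xᵢ`, and
`t'⁽ⁱ⁻¹⁾ = xᵢ·t⁽ⁱ⁻¹⁾` otherwise), then `t = v·μ(s)` for a letter `x ∈ A`, a standard
episturmian word `s` over `A \ {x}`, a pure epistandard morphism `μ`, and a non-empty
suffix `v` of `μ(s̃_p x)` for some `p ∈ ℕ`. -/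
theorem decomposition_implies_form {A : Type*} [Fintype A] [DecidableEq A] (t : ℕ → A)
    (hAlph : ∀ a : A, ∃ n, t n = a)
    (h : ∃ (ts : ℕ → ℕ → A) (x : ℕ → A),
      ts 0 = t ∧ (∀ i, ¬ Recurrent (ts i)) ∧
      ∀ i : ℕ, IsMorphImage (psiW (x (i + 1))) (ts (i + 1))
        (if ts i 0 = x (i + 1) then ts i else consInf (x (i + 1)) (ts i))) :
    ∃ (x : A) (s : ℕ → A) (μ : List A → List A) (p : ℕ) (v : List A) (y : ℕ → A),
      (∀ n, s n ≠ x) ∧ StdEpisturmian s ∧ PureEpistandard μ ∧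
      v ≠ [] ∧ v <:+ μ ((prefixList s p).reverse ++ [x]) ∧
      IsMorphImage μ s y ∧ t = wordAppend v y := by
  classical
  obtain ⟨ts, x, h0, hnr, hm⟩ := h
  set zz : ℕ → A := fun i => x (i + 1) with hzz
  have hstep : ∀ i, (if ts i 0 = zz i then ts i else consInf (zz i) (ts i))
      = psiInf (zz i) (ts (i+1)) := fun i => isMorphImage_psiW_unique (hm i)
  have hfl := first_letter_step ts zz hstep
  have hinv := dd_invariant ts zz hstep
  by_cases hA : ∃ N, ∀ i, N ≤ i → ts i 0 ≠ zz i
  · -- CASE A : eventually no keeps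
    obtain ⟨N, hN⟩ := hA
    set f := ts N 0 with hfdef
    have hf : ∀ d, ts (N + d) 0 = f := by
      intro d
      induction d with
      | zero => rfl
      | succ d ih =>
        show ts (N + d + 1) 0 = f
        have := (hfl (N + d) (hN (N + d) (by omega))).1
        rw [← this]
        exact ih
    have hzf : ∀ d, zz (N + d) ≠ f := by
      intro d he
      exact hN (N + d) (by omega) (by rw [hf d, ← he])
    set w : ℕ → ℕ → A := fun k n => ts (N + k) (n + 1) with hwdef
    have hcons : ∀ k, consInf f (w k) = ts (N + k) := by
      intro k
      rw [← hf k]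
      exact consInf_shift (ts (N + k))
    have hwchain : ∀ k, w k = psiInf (zz (N + k)) (w (k + 1)) := by
      intro k
      have hp := hstep (N + k)
      rw [if_neg (hN (N + k) (by omega))] at hp
      have hc1 : consInf f (w (k+1)) = ts (N + k + 1) := hcons (k+1)
      rw [← hc1] at hp
      rw [psiInf_consInf] at hp
      have hzf' : ¬ (f = zz (N + k)) := fun e => (hzf k) e.symm
      rw [psiW_singleton, if_neg hzf'] at hp
      have hp2 : consInf (zz (N+k)) (ts (N+k))
          = consInf (zz (N+k)) (consInf f (psiInf (zz (N+k)) (w (k+1)))) := by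
        rw [hp, consInf_eq_wordAppend, consInf_eq_wordAppend, ← wordAppend_append]
        rfl
      have hts : ts (N+k) = consInf f (psiInf (zz (N+k)) (w (k+1))) := by
        funext n
        have := congrFun hp2 (n+1)
        rwa [consInf_succ, consInf_succ] at this
      funext n
      have := congrFun hts (n+1)
      rwa [consInf_succ] at this
    have hnotf : ∀ n k, w k n ≠ f := by
      intro n
      induction n using Nat.strong_induction_on with
      | _ n ihn =>
        intro k he
        rw [hwchain k] at he
        obtain ⟨m, hmn, hmv⟩ := psiInf_letter_decode he (fun e => hzf k e.symm)
        exact ihn m hmn (k + 1) hmv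
    have hstd : StdEpisturmian (w 0) :=
      chain_std (V := w) (ξ := fun k => zz (N + k)) hwchain
    obtain ⟨e1, e2, e3⟩ := hinv N
    have e2' : ddW ts zz N <+: MuW zz N [f] := e2
    have e3' : (ddW ts zz N).length < (MuW zz N [f]).length := e3
    have htsN : ts N = consInf f (w 0) := (hcons 0).symm
    have hMuN : MuInf zz N (ts N) = wordAppend (MuW zz N [f]) (MuInf zz N (w 0)) := by
      rw [htsN, MuInf_consInf]
    have hdv : ddW ts zz N ++ (MuW zz N [f]).drop (ddW ts zz N).length = MuW zz N [f] := by
      conv_rhs => rw [← List.take_append_drop (ddW ts zz N).length (MuW zz N [f])]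
      congr 1
      exact List.prefix_iff_eq_take.1 e2' 
    have ht : ts 0 = wordAppend ((MuW zz N [f]).drop (ddW ts zz N).length)
        (MuInf zz N (w 0)) := by
      apply wordAppend_cancel (d := ddW ts zz N)
      rw [e1, hMuN, ← wordAppend_append, hdv]
    refine ⟨f, w 0, MuW zz N, 0, (MuW zz N [f]).drop (ddW ts zz N).length,
      MuInf zz N (w 0), fun n => hnotf n 0, hstd, MuW_pure zz N, ?_, ?_, ?_, ?_⟩
    · have hdlen : ((MuW zz N [f]).drop (ddW ts zz N).length).length
        = (MuW zz N [f]).length - (ddW ts zz N).length := List.length_drop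
      intro hnil
      rw [hnil] at hdlen
      simp at hdlen
      omega
    · show _ <:+ MuW zz N ((prefixList (w 0) 0).reverse ++ [f])
      have hpl : (prefixList (w 0) 0).reverse ++ [f] = [f] := by
        rw [prefixList_zero]
        rfl
      rw [hpl]
      exact List.drop_suffix _ _
    · exact isMorphImage_MuInf zz N (w 0)
    · rw [← h0]
      exact ht
  · -- CASE B : keeps occur beyond every bound; contradiction with non-recurrence
    exfalso
    push_neg at hA
    obtain ⟨pstar, hp⟩ := defect_of_not_recurrent (hnr 0)
    -- a long first block forces the first letter to be unique
    have hKU : ∀ j, pstar + (ddW ts zz j).length ≤ (MuW zz j [ts j 0]).length →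
        ∀ m, 1 ≤ m → ts j m ≠ ts j 0 := by
      intro j hG m hm he
      obtain ⟨e1, e2, e3⟩ := hinv j
      have hfac : FactorAt (ts j) [ts j 0] m := factorAt_cons.2 ⟨he, factorAt_nil _ _⟩
      obtain ⟨m', hmm', hfac'⟩ := MuInf_factorAt zz j hfac
      rw [← e1] at hfac'
      have hdv : ddW ts zz j ++ (MuW zz j [ts j 0]).drop (ddW ts zz j).length
          = MuW zz j [ts j 0] := by
        conv_rhs => rw [← List.take_append_drop (ddW ts zz j).length (MuW zz j [ts j 0])]
        congr 1
        exact List.prefix_iff_eq_take.1 e2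
      have hfac2 : FactorAt (ts 0) ((MuW zz j [ts j 0]).drop (ddW ts zz j).length) m' := by
        rw [← hdv] at hfac'
        have h2 := (factorAt_append.1 hfac').2
        rw [show m' + (ddW ts zz j).length = (ddW ts zz j).length + m' by omega] at h2
        exact (factorAt_wordAppend).1 h2
      have hBpre : IsPrefixInf (MuW zz j [ts j 0]) (wordAppend (ddW ts zz j) (ts 0)) := by
        rw [e1]
        have himg := isMorphImage_MuInf zz j (ts j) 1
        rwa [prefixList_one] at himg
      have hvpre : IsPrefixInf ((MuW zz j [ts j 0]).drop (ddW ts zz j).length) (ts 0) := by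
        rw [← hdv] at hBpre
        exact (isPrefixInf_wordAppend_iff).1 hBpre
      have hppre : prefixList (ts 0) pstar
          <+: (MuW zz j [ts j 0]).drop (ddW ts zz j).length := by
        rw [isPrefixInf_eq_prefixList hvpre]
        apply prefixList_prefix
        rw [List.length_drop]
        omega
      have := hp m' (factorAt_prefix hppre hfac2)
      omega
    -- a keep step is impossible when the first letter is unique
    have hKeepImp : ∀ k, (∀ m, 1 ≤ m → ts k m ≠ ts k 0) → ts k 0 ≠ zz k := by
      intro k huniq hkeq
      have hk := hstep k
      rw [if_pos hkeq] at hk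
      have hL1 : 1 ≤ (psiW (zz k) (prefixList (ts (k+1)) 1)).length :=
        length_psiW_prefixList (zz k) (ts (k+1)) 1
      have hsnoc := psiInf_snoc_z (zz k) (ts (k+1)) 1
      have hlt : (psiW (zz k) (prefixList (ts (k+1)) 1)).length
          < (psiW (zz k) (prefixList (ts (k+1)) 1) ++ [zz k]).length := by
        simp
      have hval := isPrefixInf_getElem hsnoc hlt
      rw [List.getElem_append_right (le_refl _)] at hval
      simp at hval
      have hts : ts k ((psiW (zz k) (prefixList (ts (k+1)) 1)).length) = zz k := by
        rw [hk]
        exact hval.symm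
      exact huniq _ hL1 (by rw [hts, ← hkeq])
    -- unique first letter propagates along prepend steps
    have hNoKeepAbove : ∀ j, (∀ m, 1 ≤ m → ts j m ≠ ts j 0) → ∀ d,
        ts (j + d) 0 = ts j 0 ∧ (∀ m, 1 ≤ m → ts (j + d) m ≠ ts j 0) := by
      intro j huniq d
      induction d with
      | zero => exact ⟨rfl, huniq⟩
      | succ d ih =>
        obtain ⟨ihf, ihu⟩ := ih
        have hnk : ts (j + d) 0 ≠ zz (j + d) := by
          apply hKeepImp (j + d)
          intro m hm
          rw [ihf]
          exact ihu m hm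
        have hfl1 := hfl (j + d) hnk
        constructor
        · show ts (j + d + 1) 0 = ts j 0
          rw [← hfl1.1, ihf]
        · show ∀ m, 1 ≤ m → ts (j + d + 1) m ≠ ts j 0
          intro m hm he
          have hzne : ts j 0 ≠ zz (j + d) := by rw [← ihf]; exact hnk
          obtain ⟨m', hm', hup⟩ := psiInf_letter_up (z := zz (j + d)) (m := m)
            (c := ts j 0) he hzne
          have hps := hstep (j + d)
          rw [if_neg hnk] at hps
          rw [← hps] at hup
          have hm'' : m' = (m' - 1) + 1 := by omega
          rw [hm'', consInf_succ] at hup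
          exact ihu (m' - 1) (by omega) hup
    -- hence the first block can never get long
    have hGbound : ∀ j, (MuW zz j [ts j 0]).length < pstar + (ddW ts zz j).length := by
      intro j
      by_contra hge
      push_neg at hge
      have huniq := hKU j hge
      obtain ⟨i, hij, hkeep⟩ := hA j
      have hi := hNoKeepAbove j huniq (i - j)
      rw [show j + (i - j) = i by omega] at hi
      exact hKeepImp i (by intro m hm; rw [hi.1]; exact hi.2 m hm) hkeep
    -- monotonicity of the block-length gap, strict at bad keeps
    have hGstep : ∀ j,
        ((MuW zz j [ts j 0]).length - (ddW ts zz j).length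
          ≤ (MuW zz (j+1) [ts (j+1) 0]).length - (ddW ts zz (j+1)).length) ∧
        ((ts j 0 = zz j ∧ ts (j+1) 0 ≠ zz j) →
          (MuW zz j [ts j 0]).length - (ddW ts zz j).length + 1
            ≤ (MuW zz (j+1) [ts (j+1) 0]).length - (ddW ts zz (j+1)).length) := by
      intro j
      obtain ⟨-, -, e3⟩ := hinv j
      obtain ⟨-, -, e3'⟩ := hinv (j+1)
      by_cases hk : ts j 0 = zz j
      · by_cases hg : ts (j+1) 0 = zz j
        · have hMeq : MuW zz (j+1) [ts (j+1) 0] = MuW zz j [ts j 0] := by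
            show MuW zz j (psiW (zz j) [ts (j+1) 0]) = _
            rw [psiW_singleton, if_pos hg, ← hk]
          have hdeq : ddW ts zz (j+1) = ddW ts zz j := by simp [ddW, hk]
          rw [hMeq, hdeq]
          exact ⟨le_refl _, fun hb => absurd hg hb.2⟩
        · have hMeq : MuW zz (j+1) [ts (j+1) 0]
              = MuW zz j [ts j 0] ++ MuW zz j [ts (j+1) 0] := by
            show MuW zz j (psiW (zz j) [ts (j+1) 0]) = _
            rw [psiW_singleton, if_neg hg,
              show ([zz j, ts (j+1) 0] : List A) = [zz j] ++ [ts (j+1) 0] from rfl,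
              MuW_append, ← hk]
          have hdeq : ddW ts zz (j+1) = ddW ts zz j := by simp [ddW, hk]
          have hlen2 : 1 ≤ (MuW zz j [ts (j+1) 0]).length := by
            have := length_MuW_ge zz j [ts (j+1) 0]
            simp at this
            omega
          have hl : (MuW zz (j+1) [ts (j+1) 0]).length
              = (MuW zz j [ts j 0]).length + (MuW zz j [ts (j+1) 0]).length := by
            rw [hMeq, List.length_append]
          rw [hl, hdeq]
          constructor
          · omega
          · intro _
            omega
      · have hfl1 := hfl j hk
        have hMeq : MuW zz (j+1) [ts (j+1) 0]
            = MuW zz j [zz j] ++ MuW zz j [ts j 0] := by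
          show MuW zz j (psiW (zz j) [ts (j+1) 0]) = _
          rw [psiW_singleton, if_neg hfl1.2,
            show ([zz j, ts (j+1) 0] : List A) = [zz j] ++ [ts (j+1) 0] from rfl,
            MuW_append, ← hfl1.1]
        have hdeq : ddW ts zz (j+1) = MuW zz j [zz j] ++ ddW ts zz j := by simp [ddW, hk]
        have hl : (MuW zz (j+1) [ts (j+1) 0]).length
            = (MuW zz j [zz j]).length + (MuW zz j [ts j 0]).length := by
          rw [hMeq, List.length_append]
        have hl2 : (ddW ts zz (j+1)).length
            = (MuW zz j [zz j]).length + (ddW ts zz j).length := by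
          rw [hdeq, List.length_append]
        rw [hl, hl2]
        exact ⟨by omega, fun hb => absurd hb.1 hk⟩
    have hGmono : ∀ a b, a ≤ b →
        (MuW zz a [ts a 0]).length - (ddW ts zz a).length
          ≤ (MuW zz b [ts b 0]).length - (ddW ts zz b).length := by
      intro a b hab
      induction b, hab using Nat.le_induction with
      | base => exact le_refl _
      | succ b hb ih => exact le_trans ih (hGstep b).1
    -- only finitely many bad keeps
    have hbadfin : ∃ N0, ∀ j, N0 ≤ j → ¬(ts j 0 = zz j ∧ ts (j+1) 0 ≠ zz j) := by
      by_contra hb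
      push_neg at hb
      have hub : ∀ c, ∃ j, c ≤ (MuW zz j [ts j 0]).length - (ddW ts zz j).length := by
        intro c
        induction c with
        | zero => exact ⟨0, by omega⟩
        | succ c ih =>
          obtain ⟨j, hj⟩ := ih
          obtain ⟨k, hk, hbad⟩ := hb j
          refine ⟨k + 1, ?_⟩
          have h1 := hGmono j k hk
          have h2 := (hGstep k).2 hbad
          omega
      obtain ⟨j, hj⟩ := hub (pstar + 1)
      have hbd := hGbound j
      obtain ⟨-, -, e3⟩ := hinv j
      omega
    obtain ⟨N0, hN0⟩ := hbadfin
    -- the first letter is eventually constant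
    set fB := ts N0 0 with hfB
    have hfc : ∀ d, ts (N0 + d) 0 = fB := by
      intro d
      induction d with
      | zero => rfl
      | succ d ih =>
        show ts (N0 + d + 1) 0 = fB
        by_cases hk : ts (N0 + d) 0 = zz (N0 + d)
        · by_cases hg : ts (N0 + d + 1) 0 = zz (N0 + d)
          · rw [hg, ← hk, ih]
          · exact absurd ⟨hk, hg⟩ (hN0 (N0 + d) (by omega))
        · rw [← (hfl (N0 + d) hk).1, ih]
    -- tail chain
    set wB : ℕ → ℕ → A := fun k n => ts (N0 + k) (n + 1) with hwB
    have hconsB : ∀ k, consInf fB (wB k) = ts (N0 + k) := by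
      intro k
      rw [← hfc k]
      exact consInf_shift _
    have hwchainB : ∀ k, wB k = psiInf (zz (N0 + k)) (wB (k + 1)) := by
      intro k
      by_cases hk : ts (N0 + k) 0 = zz (N0 + k)
      · have hkk := hstep (N0 + k)
        rw [if_pos hk] at hkk
        have hzfB : zz (N0 + k) = fB := by rw [← hk, hfc k]
        have hc1 : consInf fB (wB (k+1)) = ts (N0 + k + 1) := hconsB (k+1)
        rw [← hc1, psiInf_consInf] at hkk
        rw [psiW_singleton, if_pos hzfB.symm] at hkk
        funext n
        have := congrFun hkk (n + 1)
        rw [← consInf_eq_wordAppend, consInf_succ] at this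
        exact this
      · have hpp := hstep (N0 + k)
        rw [if_neg hk] at hpp
        have hc1 : consInf fB (wB (k+1)) = ts (N0 + k + 1) := hconsB (k+1)
        rw [← hc1, psiInf_consInf] at hpp
        have hzf' : ¬ (fB = zz (N0 + k)) := by rw [← hfc k]; exact hk
        rw [psiW_singleton, if_neg hzf'] at hpp
        have hp2 : consInf (zz (N0+k)) (ts (N0+k))
            = consInf (zz (N0+k)) (consInf fB (psiInf (zz (N0+k)) (wB (k+1)))) := by
          rw [hpp, consInf_eq_wordAppend, consInf_eq_wordAppend, ← wordAppend_append]
          rfl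
        have hts : ts (N0+k) = consInf fB (psiInf (zz (N0+k)) (wB (k+1))) := by
          funext n
          have := congrFun hp2 (n+1)
          rwa [consInf_succ, consInf_succ] at this
        funext n
        have := congrFun hts (n+1)
        rwa [consInf_succ] at this
    -- the letter fB appears in the directive word beyond every bound
    have hkeepinf : ∀ j, ∃ k, j ≤ k ∧ zz (N0 + k) = fB := by
      intro j
      obtain ⟨i, hij, hkeep⟩ := hA (N0 + j)
      refine ⟨i - N0, by omega, ?_⟩
      rw [show N0 + (i - N0) = i by omega, ← hkeep]
      have hfi := hfc (i - N0)
      rwa [show N0 + (i - N0) = i by omega] at hfi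
    -- ts N0 is recurrent, contradiction
    apply hnr N0
    apply recurrent_of_prefixes
    intro p
    cases p with
    | zero => exact ⟨1, le_refl 1, factorAt_nil _ 1⟩
    | succ q =>
      obtain ⟨Q, hpal, hpre, hlen, hfac⟩ :=
        chain_QF (V := wB) (ξ := fun k => zz (N0 + k)) hwchainB fB hkeepinf q 0
      have hrev := chain_reverse_closed (V := wB) (ξ := fun k => zz (N0 + k))
        hwchainB 0 _ hfac
      have hrevQ : IsFactorInf (wB 0) (fB :: Q) := by
        have he : (Q ++ [fB]).reverse = fB :: Q := by
          rw [List.reverse_append, hpal]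
          rfl
        rwa [he] at hrev
      obtain ⟨m, hmfac⟩ := hrevQ
      have hc0 : consInf fB (wB 0) = ts N0 := hconsB 0
      have hplq : prefixList (ts N0) (q + 1) = fB :: prefixList (wB 0) q := by
        rw [← hc0, prefixList_consInf]
      have hqQ : prefixList (wB 0) q <+: Q :=
        isPrefixInf_prefix_of_le (isPrefixInf_prefixList _ _) hpre
          (by rw [prefixList_length]; omega)
      have hPfac : FactorAt (wB 0) (fB :: prefixList (wB 0) q) m :=
        factorAt_prefix (List.cons_prefix_cons.2 ⟨rfl, hqQ⟩) hmfac
      refine ⟨m + 1, by omega, ?_⟩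
      rw [hplq, ← hc0]
      exact (factorAt_consInf_succ).2 hPfac
end
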